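/- arXiv:2112.08034 — 2 statements merged into one kernel-verified Lean document; each statement's English description precedes it below -/
import Mathlib

section
/- Iterating the ordered shuffle over all permutations recovers the full shuffle: for nonempty words w^1, ..., w^m, the multiset Sh(w^1, ..., w^m) of all shuffles of the words equals the disjoint union over π ∈ S_m of the multisets of ordered shuffles of (w^{π(1)}, ..., w^{π(m)}). Equivalently, as a diagram statement: m! · (symmetrization) ∘ (reduced iterated ordered-shuffle coproduct) = (reduced iterated shuffle coproduct) on T(V). -/
/-- Multiset of all shuffles (interleavings) of two lists. -/
def shuffles {α : Type*} : List α → List α → Multiset (List α)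
  | [], bs => {bs}
  | a :: as, [] => {a :: as}
  | a :: as, b :: bs =>
      (shuffles as (b :: bs)).map (a :: ·) + (shuffles (a :: as) bs).map (b :: ·)
termination_by as bs => as.length + bs.length

/-- Half (ordered) shuffle of two words: the shuffles in which the last letter
of the second word stays last.  Convention: `osh2 a [] = 0`, `osh2 [] b = {b}`. -/
def osh2 {α : Type*} (a b : List α) : Multiset (List α) :=
  match b.getLast? with
  | none => 0
  | some x => (shuffles a b.dropLast).map (· ++ [x])

/-- Multiset of ordered shuffles of a list of words (iterated half-shuffle,
left to right): interleavings in which the final letters of the words appear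
in the given relative order. -/
def oshMany {α : Type*} (ws : List (List α)) : Multiset (List α) :=
  ws.foldl (fun acc w => acc.bind fun u => osh2 u w) {([] : List α)}

/-- Multiset of all shuffles of a list of words. -/
def shMany {α : Type*} (ws : List (List α)) : Multiset (List α) :=
  ws.foldl (fun acc w => acc.bind fun u => shuffles u w) {([] : List α)}

/-! ### Basic lemmas about `shuffles` -/

theorem shuffles_nil_left {α : Type*} (b : List α) : shuffles [] b = {b} := by
  rw [shuffles]

theorem shuffles_nil_right {α : Type*} (a : List α) : shuffles a [] = {a} := by
  cases a <;> rw [shuffles]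

theorem shuffles_cons_cons {α : Type*} (x y : α) (a b : List α) :
    shuffles (x :: a) (y :: b)
      = (shuffles a (y :: b)).map (x :: ·) + (shuffles (x :: a) b).map (y :: ·) := by
  rw [shuffles]

theorem ne_nil_of_mem_shuffles {α : Type*} : ∀ (a b t : List α), b ≠ [] →
    t ∈ shuffles a b → t ≠ []
  | [], b, t, hb, ht => by
      rw [shuffles_nil_left, Multiset.mem_singleton] at ht; subst ht; exact hb
  | x :: a, [], t, hb, ht => absurd rfl hb
  | x :: a, y :: b, t, _, ht => by
      rw [shuffles_cons_cons, Multiset.mem_add] at ht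
      rcases ht with ht | ht <;>
        · rw [Multiset.mem_map] at ht
          obtain ⟨s, -, rfl⟩ := ht
          simp

theorem shuffles_concat {α : Type*} (x y : α) :
    ∀ (u v : List α), shuffles (u ++ [x]) (v ++ [y]) =
      (shuffles u (v ++ [y])).map (· ++ [x]) + (shuffles (u ++ [x]) v).map (· ++ [y])
  | [], [] => by
      simp only [List.nil_append, shuffles_cons_cons, shuffles_nil_left, shuffles_nil_right,
        Multiset.map_singleton]
      exact add_comm _ _
  | [], q :: v => by
      have ih := shuffles_concat x y [] v
      simp only [List.nil_append, List.cons_append] at ih ⊢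
      simp only [shuffles_cons_cons, shuffles_nil_left, shuffles_nil_right, Multiset.map_add,
        Multiset.map_map, Multiset.map_singleton, Function.comp_def, List.cons_append] at ih ⊢
      rw [ih]
      simp only [Multiset.map_add, Multiset.map_map, Multiset.map_singleton, Function.comp_def,
        List.cons_append]
      abel
  | p :: u, [] => by
      have ih := shuffles_concat x y u []
      simp only [List.nil_append, List.cons_append] at ih ⊢
      simp only [shuffles_cons_cons, shuffles_nil_left, shuffles_nil_right, Multiset.map_add,
        Multiset.map_map, Multiset.map_singleton, Function.comp_def, List.cons_append] at ih ⊢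
      rw [ih]
      simp only [Multiset.map_add, Multiset.map_map, Multiset.map_singleton, Function.comp_def,
        List.cons_append]
      abel
  | p :: u, q :: v => by
      have ih1 := shuffles_concat x y u (q :: v)
      have ih2 := shuffles_concat x y (p :: u) v
      simp only [List.nil_append, List.cons_append] at ih1 ih2 ⊢
      simp only [shuffles_cons_cons, shuffles_nil_left, shuffles_nil_right, Multiset.map_add,
        Multiset.map_map, Multiset.map_singleton, Function.comp_def, List.cons_append]
        at ih1 ih2 ⊢
      rw [ih1, ih2]
      simp only [Multiset.map_add, Multiset.map_map, Multiset.map_singleton, Function.comp_def,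
        List.cons_append]
      abel
termination_by u v => u.length + v.length

theorem shuffles_comm {α : Type*} : ∀ (a b : List α), shuffles a b = shuffles b a
  | [], b => by rw [shuffles_nil_left, shuffles_nil_right]
  | x :: a, [] => by rw [shuffles_nil_left, shuffles_nil_right]
  | x :: a, y :: b => by
      rw [shuffles_cons_cons, shuffles_cons_cons y x, shuffles_comm a (y :: b),
        shuffles_comm (x :: a) b]
      exact add_comm _ _
termination_by a b => a.length + b.length

private theorem bind_id' {α : Type*} (M : Multiset (List α)) :
    (M.bind fun t => ({t} : Multiset (List α))) = M := by
  simpa using Multiset.bind_singleton M id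

private theorem expand3 {α : Type*} (u a b : List α) (p q r : α) :
    (shuffles (p :: u) (q :: a)).bind (fun t => shuffles t (r :: b)) =
      ((shuffles u (q :: a)).bind (fun t => shuffles t (r :: b))).map (p :: ·) +
      ((shuffles (p :: u) a).bind (fun t => shuffles t (r :: b))).map (q :: ·) +
      ((shuffles (p :: u) (q :: a)).bind (fun t => shuffles t b)).map (r :: ·) := by
  have step : ∀ (h : α) (M : Multiset (List α)),
      (M.map (h :: ·)).bind (fun t => shuffles t (r :: b)) =
        (M.bind (fun t => shuffles t (r :: b))).map (h :: ·) +
          ((M.map (h :: ·)).bind (fun t => shuffles t b)).map (r :: ·) := by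
    intro h M
    rw [Multiset.bind_map]
    simp only [shuffles_cons_cons]
    rw [Multiset.bind_add, ← Multiset.map_bind, ← Multiset.map_bind, Multiset.bind_map]
  rw [shuffles_cons_cons p q, Multiset.add_bind, step, step, Multiset.add_bind,
    Multiset.map_add]
  abel

theorem shuffles_bind_comm {α : Type*} : ∀ (u a b : List α),
    (shuffles u a).bind (fun t => shuffles t b) =
      (shuffles u b).bind (fun t => shuffles t a)
  | [], a, b => by
      rw [shuffles_nil_left, shuffles_nil_left, Multiset.singleton_bind,
        Multiset.singleton_bind, shuffles_comm]
  | p :: u, [], b => by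
      rw [shuffles_nil_right, Multiset.singleton_bind]
      simp only [shuffles_nil_right]
      rw [bind_id']
  | p :: u, q :: a, [] => by
      rw [shuffles_nil_right, Multiset.singleton_bind]
      simp only [shuffles_nil_right]
      rw [bind_id']
  | p :: u, q :: a, r :: b => by
      rw [expand3, expand3 u b a p r q,
        shuffles_bind_comm u (q :: a) (r :: b),
        shuffles_bind_comm (p :: u) a (r :: b),
        shuffles_bind_comm (p :: u) (q :: a) b]
      abel
termination_by u a b => u.length + a.length + b.length

/-! ### Iterated shuffles -/

/-- Iterated shuffle starting from an arbitrary multiset. -/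
def listF {α : Type*} (M : Multiset (List α)) (ws : List (List α)) : Multiset (List α) :=
  ws.foldl (fun acc w => acc.bind fun u => shuffles u w) M

theorem shMany_eq_listF {α : Type*} (ws : List (List α)) : shMany ws = listF {[]} ws := rfl

theorem listF_nil {α : Type*} (M : Multiset (List α)) : listF M [] = M := rfl

theorem listF_cons {α : Type*} (M : Multiset (List α)) (w : List α) (l : List (List α)) :
    listF M (w :: l) = listF (M.bind fun u => shuffles u w) l := rfl

theorem listF_concat {α : Type*} (M : Multiset (List α)) (w : List α) (l : List (List α)) :
    listF M (l ++ [w]) = (listF M l).bind (fun u => shuffles u w) :=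
  List.foldl_concat _ _ _ _

theorem listF_singleton_cons {α : Type*} (u w : List α) (l : List (List α)) :
    listF {u} (w :: l) = listF (shuffles u w) l := by
  rw [listF_cons, Multiset.singleton_bind]

theorem listF_nil_cons {α : Type*} (w : List α) (l : List (List α)) :
    listF {([] : List α)} (w :: l) = listF {w} l := by
  rw [listF_singleton_cons, shuffles_nil_left]

instance shuffleStep_rightCommutative {α : Type*} :
    RightCommutative (fun (acc : Multiset (List α)) (w : List α) =>
      acc.bind fun u => shuffles u w) :=
  ⟨fun M a b => by
    rw [Multiset.bind_assoc, Multiset.bind_assoc]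
    exact Multiset.bind_congr fun t _ => shuffles_bind_comm t a b⟩

theorem listF_perm {α : Type*} {l₁ l₂ : List (List α)} (h : l₁.Perm l₂)
    (M : Multiset (List α)) : listF M l₁ = listF M l₂ :=
  h.foldl_eq M

theorem shMany_perm {α : Type*} {l₁ l₂ : List (List α)} (h : l₁.Perm l₂) :
    shMany l₁ = shMany l₂ := by
  rw [shMany_eq_listF, shMany_eq_listF]; exact listF_perm h _

theorem listF_bind {α : Type*} : ∀ (l : List (List α)) (M : Multiset (List α)),
    listF M l = M.bind fun t => listF {t} l
  | [], M => (bind_id' M).symm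
  | w :: l, M => by
      rw [listF_cons, listF_bind l, Multiset.bind_assoc]
      exact Multiset.bind_congr fun t _ => by
        rw [listF_singleton_cons, listF_bind l]

/-! ### tailOp and osh2 -/

/-- Append the last letter of `w` to every element (zero if `w` is empty). -/
def tailOp {α : Type*} (w : List α) (M : Multiset (List α)) : Multiset (List α) :=
  match w.getLast? with
  | none => 0
  | some x => M.map (· ++ [x])

theorem tailOp_nil {α : Type*} (M : Multiset (List α)) : tailOp [] M = 0 := rfl

theorem tailOp_concat {α : Type*} (w : List α) (y : α) (M : Multiset (List α)) :
    tailOp (w ++ [y]) M = M.map (· ++ [y]) := by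
  unfold tailOp
  rw [List.getLast?_concat]

theorem osh2_eq {α : Type*} (u w : List α) :
    osh2 u w = tailOp w (shuffles u w.dropLast) := by
  unfold osh2 tailOp
  cases w.getLast? <;> rfl

theorem bind_tailOp {α : Type*} (M : Multiset (List α)) (g : List α → Multiset (List α))
    (w : List α) : M.bind (fun t => tailOp w (g t)) = tailOp w (M.bind g) := by
  unfold tailOp
  cases w.getLast? with
  | none => simp
  | some x => rw [← Multiset.map_bind]

theorem bind_osh2 {α : Type*} (M : Multiset (List α)) (w : List α) :
    M.bind (fun u => osh2 u w) = tailOp w (M.bind fun u => shuffles u w.dropLast) := by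
  simp only [osh2_eq]
  exact bind_tailOp M _ w

theorem bind_finsetSum {ι β γ : Type*} (s : Finset ι) (M : Multiset β)
    (F : ι → β → Multiset γ) :
    M.bind (fun t => ∑ p ∈ s, F p t) = ∑ p ∈ s, M.bind (F p) := by
  classical
  induction s using Finset.induction_on with
  | empty => simp
  | insert _ _ h ih => simp [Finset.sum_insert h, Multiset.bind_add, ih]

theorem finsetSum_bind {ι β γ : Type*} (s : Finset ι) (M : ι → Multiset β)
    (f : β → Multiset γ) :
    (∑ p ∈ s, M p).bind f = ∑ p ∈ s, (M p).bind f := by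
  classical
  induction s using Finset.induction_on with
  | empty => simp
  | insert _ _ h ih => simp [Finset.sum_insert h, Multiset.add_bind, ih]

/-! ### The key decomposition by the word owning the final letter -/

theorem Hlem {α : Type*} : ∀ (ws : List (List α)) (u : List α),
    (∀ w ∈ ws, w ≠ []) → (u ≠ [] ∨ ws ≠ []) →
    listF {u} ws =
      (∑ p : Fin ws.length,
        tailOp (ws.get p) (listF {u} (ws.set p (ws.get p).dropLast)))
        + tailOp u (listF {u.dropLast} ws)
  | [], u, _, hu => by
      have hu' : u ≠ [] := hu.resolve_right (fun h => h rfl)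
      obtain ⟨u', x, rfl⟩ := (List.eq_nil_or_concat u).resolve_left hu'
      simp only [List.concat_eq_append, List.length_nil, listF_nil, List.dropLast_concat,
        tailOp_concat, Multiset.map_singleton]
      rw [Finset.univ_eq_empty, Finset.sum_empty, zero_add]
  | w :: l, u, hws, _ => by
      have hw : w ≠ [] := hws w List.mem_cons_self
      have hl : ∀ v ∈ l, v ≠ [] := fun v hv => hws v (List.mem_cons_of_mem _ hv)
      have key : listF {u} (w :: l) =
          (∑ p : Fin l.length,
              tailOp (l.get p) (listF {u} (w :: l.set p (l.get p).dropLast)))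
            + (shuffles u w).bind (fun t => tailOp t (listF {t.dropLast} l)) := by
        rw [listF_singleton_cons, listF_bind]
        rw [Multiset.bind_congr
          (fun t ht => Hlem l t hl (Or.inl (ne_nil_of_mem_shuffles u w t hw ht)))]
        rw [Multiset.bind_add]
        congr 1
        rw [bind_finsetSum]
        refine Finset.sum_congr rfl (fun p _ => ?_)
        rw [bind_tailOp, ← listF_bind, ← listF_singleton_cons]
      have part2 : (shuffles u w).bind (fun t => tailOp t (listF {t.dropLast} l)) =
          tailOp w (listF {u} (w.dropLast :: l)) + tailOp u (listF {u.dropLast} (w :: l)) := by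
        obtain ⟨w', y, rfl⟩ := (List.eq_nil_or_concat w).resolve_left hw
        simp only [List.concat_eq_append] at *
        rcases List.eq_nil_or_concat u with rfl | ⟨u', x, rfl⟩
        · rw [shuffles_nil_left, Multiset.singleton_bind, tailOp_nil, add_zero,
            List.dropLast_concat, tailOp_concat, tailOp_concat, listF_nil_cons]
        · simp only [List.concat_eq_append]
          rw [shuffles_concat x y u' w', Multiset.add_bind, Multiset.bind_map,
            Multiset.bind_map]
          simp only [tailOp_concat, List.dropLast_concat]
          rw [← Multiset.map_bind, ← Multiset.map_bind, ← listF_bind, ← listF_bind,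
            ← listF_singleton_cons, ← listF_singleton_cons]
          exact add_comm _ _
      rw [key, part2]
      simp only [List.length_cons]
      rw [Fin.sum_univ_succ]
      simp only [List.get_eq_getElem, Fin.val_zero, List.getElem_cons_zero, Fin.val_succ,
        List.getElem_cons_succ, List.set_cons_succ, List.set_cons_zero]
      abel
termination_by ws u => ws.length

/-! ### Index manipulation lemmas -/

theorem coe_ofFn {β : Type*} {n : ℕ} (f : Fin n → β) :
    ((List.ofFn f : List β) : Multiset β) = (Finset.univ : Finset (Fin n)).val.map f := by
  rw [List.ofFn_eq_map, Fin.univ_def, ← Multiset.map_coe]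

theorem map_perm_univ {ι : Type*} [Fintype ι] [DecidableEq ι] (e : Equiv.Perm ι) :
    (Finset.univ : Finset ι).val.map ⇑e = (Finset.univ : Finset ι).val := by
  have h := congrArg Finset.val (Finset.map_univ_equiv e)
  rw [Finset.map_val] at h
  simpa using h

theorem perm_ofFn_comp {β : Type*} {n : ℕ} (f : Fin n → β) (e : Equiv.Perm (Fin n)) :
    (List.ofFn (fun i => f (e i))).Perm (List.ofFn f) := by
  rw [← Multiset.coe_eq_coe, coe_ofFn, coe_ofFn]
  show Multiset.map (f ∘ ⇑e) _ = _
  rw [← Multiset.map_map, map_perm_univ]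

theorem univ_val_succAbove {n : ℕ} (p : Fin (n + 1)) :
    (Finset.univ : Finset (Fin (n + 1))).val
      = p ::ₘ (Finset.univ : Finset (Fin n)).val.map p.succAbove := by
  have h1 : ((Finset.univ : Finset (Fin (n + 1))).val).Nodup := Finset.univ.nodup
  have h2 : (p ::ₘ (Finset.univ : Finset (Fin n)).val.map p.succAbove).Nodup := by
    rw [Multiset.nodup_cons]
    refine ⟨?_, Multiset.Nodup.map Fin.succAbove_right_injective Finset.univ.nodup⟩
    rw [Multiset.mem_map]
    rintro ⟨i, -, hi⟩
    exact Fin.succAbove_ne p i hi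
  rw [Multiset.Nodup.ext h1 h2]
  intro a
  constructor
  · intro _
    rcases eq_or_ne a p with rfl | ha
    · exact Multiset.mem_cons_self _ _
    · obtain ⟨z, hz⟩ := Fin.exists_succAbove_eq ha
      exact Multiset.mem_cons_of_mem
        (Multiset.mem_map.mpr ⟨z, Finset.mem_val.mpr (Finset.mem_univ z), hz⟩)
  · intro _
    exact Finset.mem_val.mpr (Finset.mem_univ a)

theorem perm_ofFn_succAbove {β : Type*} {n : ℕ} (f : Fin (n + 1) → β) (p : Fin (n + 1)) :
    (List.ofFn f).Perm (f p :: List.ofFn (fun i => f (p.succAbove i))) := by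
  rw [← Multiset.coe_eq_coe, ← Multiset.cons_coe, coe_ofFn, coe_ofFn,
    univ_val_succAbove p, Multiset.map_cons, Multiset.map_map]
  rfl

theorem map_swapSucc_eq {n : ℕ} (p : Fin (n + 1)) :
    (Finset.univ : Finset (Fin n)).val.map (fun i : Fin n => Equiv.swap 0 p i.succ)
      = (Finset.univ : Finset (Fin n)).val.map p.succAbove := by
  have hinj : Function.Injective (fun i : Fin n => Equiv.swap 0 p i.succ) :=
    fun a b h => Fin.succ_injective n ((Equiv.swap 0 p).injective h)
  have h1 := Multiset.Nodup.map hinj (Finset.univ : Finset (Fin n)).nodup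
  have h2 := Multiset.Nodup.map (Fin.succAbove_right_injective (p := p))
    (Finset.univ : Finset (Fin n)).nodup
  rw [Multiset.Nodup.ext h1 h2]
  intro a
  rw [Multiset.mem_map, Multiset.mem_map]
  constructor
  · rintro ⟨i, -, rfl⟩
    have hne : Equiv.swap 0 p i.succ ≠ p := by
      intro h
      have h' := congrArg (Equiv.swap 0 p) h
      rw [Equiv.swap_apply_self, Equiv.swap_apply_right] at h'
      exact Fin.succ_ne_zero i h'
    obtain ⟨z, hz⟩ := Fin.exists_succAbove_eq hne
    exact ⟨z, Finset.mem_val.mpr (Finset.mem_univ z), hz⟩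
  · rintro ⟨i, -, rfl⟩
    have h0 : Equiv.swap 0 p (p.succAbove i) ≠ 0 := by
      intro h
      have h' := congrArg (Equiv.swap 0 p) h
      rw [Equiv.swap_apply_self, Equiv.swap_apply_left] at h'
      exact Fin.succAbove_ne p i h'
    obtain ⟨j, hj⟩ := Fin.exists_succ_eq.mpr h0
    refine ⟨j, Finset.mem_val.mpr (Finset.mem_univ j), ?_⟩
    rw [hj, Equiv.swap_apply_self]

theorem perm_ofFn_swapSucc {β : Type*} {n : ℕ} (g : Fin (n + 1) → β) (p : Fin (n + 1)) :
    (List.ofFn (fun i : Fin n => g (Equiv.swap 0 p i.succ))).Perm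
      (List.ofFn (fun i : Fin n => g (p.succAbove i))) := by
  rw [← Multiset.coe_eq_coe, coe_ofFn, coe_ofFn]
  have : (fun i : Fin n => g (Equiv.swap 0 p i.succ))
      = g ∘ (fun i : Fin n => Equiv.swap 0 p i.succ) := rfl
  rw [this, ← Multiset.map_map, map_swapSucc_eq, Multiset.map_map]
  rfl

theorem ofFn_rev {β : Type*} {m : ℕ} (f : Fin m → β) :
    List.ofFn (fun i => f i.rev) = (List.ofFn f).reverse := by
  apply List.ext_getElem
  · simp
  · intro i h1 h2
    rw [List.getElem_reverse]
    simp only [List.getElem_ofFn, List.length_ofFn]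
    congr 1
    apply Fin.ext
    simp only [Fin.val_rev]
    have hi : i < m := by simpa using h1
    omega

theorem oshMany_concat {α : Type*} (l : List (List α)) (w : List α) :
    oshMany (l ++ [w]) = (oshMany l).bind (fun u => osh2 u w) :=
  List.foldl_concat _ _ _ _

/-! ### Core identity -/

theorem set_ofFn_eq_update {α : Type*} {n : ℕ} (g : Fin n → α) (p : Fin n) (v : α) :
    (List.ofFn g).set p v = List.ofFn (Function.update g p v) := by
  apply List.ext_getElem
  · simp
  · intro i h1 h2
    rw [List.getElem_set]
    simp only [List.getElem_ofFn, Function.update_apply]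
    have hi : i < n := by simpa using h2
    by_cases h : (p : ℕ) = i
    · simp only [if_pos h]
      rw [if_pos]
      exact Fin.ext h.symm
    · simp only [if_neg h]
      rw [if_neg]
      exact fun hc => h (congrArg Fin.val hc).symm

theorem set_ofFn_perm {α : Type*} {n : ℕ} (g : Fin (n + 1) → List α) (p : Fin (n + 1))
    (v : List α) :
    ((List.ofFn g).set p v).Perm (List.ofFn (fun i => g (p.succAbove i)) ++ [v]) := by
  rw [set_ofFn_eq_update]
  refine (perm_ofFn_succAbove (Function.update g p v) p).trans ?_
  have h1 : Function.update g p v p = v := Function.update_self p v g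
  have h2 : (fun i => Function.update g p v (p.succAbove i))
      = fun i => g (p.succAbove i) := by
    funext i
    exact Function.update_of_ne (Fin.succAbove_ne p i) v g
  rw [h1, h2]
  exact (List.perm_append_singleton v _).symm

theorem core2 {α : Type*} (n : ℕ) (g : Fin (n + 1) → List α) (hg : ∀ i, g i ≠ []) :
    shMany (List.ofFn g) =
      ∑ p : Fin (n + 1),
        (shMany (List.ofFn fun i => g (p.succAbove i))).bind (fun u => osh2 u (g p)) := by
  have hlen : (List.ofFn g).length = n + 1 := List.length_ofFn
  have hws : ∀ w ∈ List.ofFn g, w ≠ [] := by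
    intro w hw
    rw [List.mem_ofFn] at hw
    obtain ⟨i, rfl⟩ := hw
    exact hg i
  have hne : List.ofFn g ≠ [] := by
    intro h
    rw [h] at hlen
    exact (Nat.succ_ne_zero n) hlen.symm
  rw [shMany_eq_listF, Hlem (List.ofFn g) [] hws (Or.inr hne), tailOp_nil, add_zero]
  rw [← Equiv.sum_comp (finCongr hlen).symm
    (fun q : Fin (List.ofFn g).length =>
      tailOp ((List.ofFn g).get q)
        (listF {[]} ((List.ofFn g).set q ((List.ofFn g).get q).dropLast)))]
  refine Finset.sum_congr rfl (fun p _ => ?_)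
  have hget : (List.ofFn g).get ((finCongr hlen).symm p) = g p := by
    rw [List.get_ofFn]
    congr 1
  rw [hget]
  have hcoe : (((finCongr hlen).symm p : Fin (List.ofFn g).length) : ℕ) = (p : ℕ) := by
    simp
  rw [hcoe]
  rw [listF_perm (set_ofFn_perm g p (g p).dropLast) _]
  rw [listF_concat, ← shMany_eq_listF, ← bind_osh2]

/-! ### Main induction -/

theorem aux2 {α : Type*} : ∀ (n : ℕ) (g : Fin n → List α), (∀ i, g i ≠ []) →
    shMany (List.ofFn g) = ∑ π : Equiv.Perm (Fin n), oshMany (List.ofFn fun i => g (π i))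
  | 0, g, _ => by
      simp only [List.ofFn_zero]
      rw [Finset.sum_const, Finset.card_univ, Fintype.card_perm, Fintype.card_fin,
        Nat.factorial_zero, one_smul]
      rfl
  | n + 1, g, hg => by
      symm
      calc ∑ π : Equiv.Perm (Fin (n + 1)), oshMany (List.ofFn fun i => g (π i))
          = ∑ π : Equiv.Perm (Fin (n + 1)),
              oshMany ((List.ofFn fun i => g (π i)).reverse) := by
            rw [← Equiv.sum_comp (Equiv.mulRight (Fin.revPerm : Equiv.Perm (Fin (n + 1))))
              (fun π : Equiv.Perm (Fin (n + 1)) => oshMany (List.ofFn fun i => g (π i)))]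
            refine Finset.sum_congr rfl fun τ _ => ?_
            congr 1
            rw [← ofFn_rev (f := fun i => g (τ i))]
            simp only [Equiv.coe_mulRight, Equiv.Perm.mul_apply, Fin.revPerm_apply]
        _ = ∑ p : Fin (n + 1), ∑ σ : Equiv.Perm (Fin n),
              oshMany ((List.ofFn fun i =>
                g (Equiv.Perm.decomposeFin.symm (p, σ) i)).reverse) := by
            rw [← Equiv.sum_comp (Equiv.Perm.decomposeFin.symm)
              (fun π : Equiv.Perm (Fin (n + 1)) =>
                oshMany ((List.ofFn fun i => g (π i)).reverse))]
            rw [Fintype.sum_prod_type]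
        _ = ∑ p : Fin (n + 1), ∑ σ : Equiv.Perm (Fin n),
              (oshMany ((List.ofFn fun i : Fin n =>
                  g (Equiv.swap 0 p (σ i).succ)).reverse)).bind
                (fun u => osh2 u (g p)) := by
            refine Finset.sum_congr rfl fun p _ => Finset.sum_congr rfl fun σ _ => ?_
            rw [List.ofFn_succ]
            simp only [Equiv.Perm.decomposeFin_symm_apply_zero,
              Equiv.Perm.decomposeFin_symm_apply_succ]
            rw [List.reverse_cons, oshMany_concat]
        _ = ∑ p : Fin (n + 1), ∑ σ : Equiv.Perm (Fin n),
              (oshMany (List.ofFn fun i : Fin n =>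
                  g (Equiv.swap 0 p (σ i).succ))).bind
                (fun u => osh2 u (g p)) := by
            refine Finset.sum_congr rfl fun p _ => ?_
            rw [← Equiv.sum_comp (Equiv.mulRight (Fin.revPerm : Equiv.Perm (Fin n)))
              (fun σ : Equiv.Perm (Fin n) =>
                (oshMany (List.ofFn fun i : Fin n =>
                  g (Equiv.swap 0 p (σ i).succ))).bind (fun u => osh2 u (g p)))]
            refine Finset.sum_congr rfl fun σ _ => ?_
            congr 2
            rw [← ofFn_rev (f := fun i : Fin n => g (Equiv.swap 0 p (σ i).succ))]
            simp only [Equiv.coe_mulRight, Equiv.Perm.mul_apply, Fin.revPerm_apply]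
        _ = ∑ p : Fin (n + 1),
              (shMany (List.ofFn fun i => g (p.succAbove i))).bind
                (fun u => osh2 u (g p)) := by
            refine Finset.sum_congr rfl fun p _ => ?_
            rw [← finsetSum_bind]
            congr 1
            rw [← aux2 n (fun i : Fin n => g (Equiv.swap 0 p i.succ)) (fun i => hg _)]
            exact shMany_perm (perm_ofFn_swapSucc g p)
        _ = shMany (List.ofFn g) := (core2 n g hg).symm
termination_by n => n

/-- For nonempty words `w¹, …, wᵐ`, the multiset
`Sh(w¹,…,wᵐ)` of all shuffles equals the disjoint union, over permutations
`π ∈ S_m`, of the multisets of ordered shuffles of `(w^{π(1)},…,w^{π(m)})`. -/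
theorem shuffles_eq_sum_orderedShuffles {α : Type*} (ws : List (List α))
    (hws : ∀ w ∈ ws, w ≠ []) :
    shMany ws =
      ∑ π : Equiv.Perm (Fin ws.length), oshMany (List.ofFn fun i => ws.get (π i)) := by
  have h := aux2 ws.length ws.get (fun i => hws _ (List.get_mem ws i))
  rwa [List.ofFn_get] at h
end

section
/- The approximant Ξ_{s,t} := ⟨H̄_s, X_{s,t}^{≥1}⟩ built from a controlled integrand H̄ is almost additive: for all 0 ≤ s ≤ u ≤ t ≤ T, Ξ_{s,t} − Ξ_{s,u} − Ξ_{u,t} = O(ω(s,t)^{(⌊p⌋+1)/p}). Consequently the rough integral ∫ H̄ dX exists as the limit of Riemann sums Σ_{[u,v]∈π} Ξ_{u,v} along partitions with vanishing mesh. -/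
/-- A control function on `[0,T]`: continuous, vanishing on the diagonal,
nonnegative, superadditive. -/
def IsControl (ω : ℝ → ℝ → ℝ) (T : ℝ) : Prop :=
  Continuous (fun st : ℝ × ℝ => ω st.1 st.2) ∧ (∀ t, ω t t = 0) ∧
    (∀ s t, 0 ≤ ω s t) ∧
    ∀ s u t, 0 ≤ s → s ≤ u → u ≤ t → t ≤ T → ω s u + ω u t ≤ ω s t

/-- A `p`-weakly geometric rough path on `[0,T]` with values in `ℝ^d`,
in coordinates: `X s t w` is the coefficient `⟨X_{s,t}, e_w⟩` of the word `w`.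
It is truncated at level `⌊p⌋`, starts at `1` in degree `0`, is continuous,
has `ω`-Hölder regularity `ω(s,t)^{|w|/p}`, satisfies Chen's multiplicativity
identity, and the shuffle (integration-by-parts/geometricity) identity. -/
structure RoughPath (d : ℕ) (p T : ℝ) (ω : ℝ → ℝ → ℝ) where
  X : ℝ → ℝ → List (Fin d) → ℝ
  empty_eq : ∀ s t, X s t [] = 1
  zero_of_high : ∀ s t (w : List (Fin d)), ⌊p⌋₊ < w.length → X s t w = 0
  cont : ∀ w, Continuous fun st : ℝ × ℝ => X st.1 st.2 w
  regularity : ∃ C, ∀ w : List (Fin d), w.length ≤ ⌊p⌋₊ → ∀ s t, 0 ≤ s → s ≤ t → t ≤ T →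
    |X s t w| ≤ C * ω s t ^ ((w.length : ℝ) / p)
  chen : ∀ s u t, 0 ≤ s → s ≤ u → u ≤ t → t ≤ T → ∀ w : List (Fin d), w.length ≤ ⌊p⌋₊ →
    X s t w = ∑ i ∈ Finset.range (w.length + 1), X s u (w.take i) * X u t (w.drop i)
  shuffle_rel : ∀ s t, 0 ≤ s → s ≤ t → t ≤ T → ∀ a b : List (Fin d),
    a.length + b.length ≤ ⌊p⌋₊ →
    X s t a * X s t b = ((shuffles a b).map (X s t)).sum

/-- The local approximant `Ξ_{s,t} = ⟨H̄_s, X_{s,t}^{≥1}⟩` of the rough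
integral, in coordinates: the sum over words `γ` with `1 ≤ |γ| ≤ N` of
`H_s^γ · X_{s,t}^γ`. -/
noncomputable def Xi (d e N : ℕ) (X : ℝ → ℝ → List (Fin d) → ℝ)
    (H : ℝ → List (Fin d) → Fin e → ℝ) (s t : ℝ) (k : Fin e) : ℝ :=
  ∑ l ∈ Finset.Icc 1 N, ∑ v : Fin l → Fin d,
    H s (List.ofFn v) k * X s t (List.ofFn v)


open Finset

lemma sum_word_split {d : ℕ} (i j : ℕ) (F : List (Fin d) → List (Fin d) → ℝ) :
    ∑ v : Fin (i + j) → Fin d, F ((List.ofFn v).take i) ((List.ofFn v).drop i)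
      = ∑ α : Fin i → Fin d, ∑ β : Fin j → Fin d, F (List.ofFn α) (List.ofFn β) := by
  calc ∑ v : Fin (i + j) → Fin d, F ((List.ofFn v).take i) ((List.ofFn v).drop i)
      = ∑ p : (Fin i → Fin d) × (Fin j → Fin d), F (List.ofFn p.1) (List.ofFn p.2) := by
        refine Fintype.sum_equiv (Fin.appendEquiv i j).symm _ _ ?_
        intro v
        have hv : List.ofFn v
            = List.ofFn (fun a => v (Fin.castAdd j a)) ++ List.ofFn (fun b => v (Fin.natAdd i b)) :=
          List.ofFn_add
        have ht := List.take_left (l₁ := List.ofFn (fun a => v (Fin.castAdd j a)))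
          (l₂ := List.ofFn (fun b => v (Fin.natAdd i b)))
        have hd := List.drop_left (l₁ := List.ofFn (fun a => v (Fin.castAdd j a)))
          (l₂ := List.ofFn (fun b => v (Fin.natAdd i b)))
        rw [List.length_ofFn] at ht hd
        rw [hv, ht, hd]
        rfl
    _ = ∑ α : Fin i → Fin d, ∑ β : Fin j → Fin d, F (List.ofFn α) (List.ofFn β) :=
        Fintype.sum_prod_type _

lemma sum_word_split' {d : ℕ} (l i : ℕ) (h : i ≤ l) (F : List (Fin d) → List (Fin d) → ℝ) :
    (∑ v : Fin l → Fin d, F ((List.ofFn v).take i) ((List.ofFn v).drop i))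
      = ∑ α : Fin i → Fin d, ∑ β : Fin (l - i) → Fin d, F (List.ofFn α) (List.ofFn β) := by
  obtain ⟨j, rfl⟩ : ∃ j, l = i + j := ⟨l - i, by omega⟩
  rw [Nat.add_sub_cancel_left]
  exact sum_word_split i j F

lemma sum_tri (N : ℕ) (G : ℕ → ℕ → ℝ) :
    ∑ l ∈ Icc 1 N, ∑ i ∈ range l, G i (l - i)
      = ∑ b ∈ Icc 1 N, ∑ a ∈ range (N - b + 1), G a b := by
  rw [Finset.sum_sigma', Finset.sum_sigma']
  refine Finset.sum_nbij' (fun x => ⟨x.1 - x.2, x.2⟩) (fun y => ⟨y.2 + y.1, y.2⟩) ?_ ?_ ?_ ?_ ?_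
  · rintro ⟨l, i⟩ hm
    simp only [Finset.mem_sigma, Finset.mem_Icc, Finset.mem_range] at hm ⊢
    omega
  · rintro ⟨b, a⟩ hm
    simp only [Finset.mem_sigma, Finset.mem_Icc, Finset.mem_range] at hm ⊢
    omega
  · rintro ⟨l, i⟩ hm
    simp only [Finset.mem_sigma, Finset.mem_Icc, Finset.mem_range] at hm
    simp only [Sigma.mk.inj_iff, heq_eq_eq]
    refine ⟨by omega, trivial⟩
  · rintro ⟨b, a⟩ hm
    simp only [Finset.mem_sigma, Finset.mem_Icc, Finset.mem_range] at hm
    simp only [Sigma.mk.inj_iff, heq_eq_eq]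
    refine ⟨by omega, trivial⟩
  · rintro ⟨l, i⟩ hm
    rfl

lemma control_mono {ω : ℝ → ℝ → ℝ} {T : ℝ} (hω : IsControl ω T) {s a b t : ℝ}
    (hs : 0 ≤ s) (h1 : s ≤ a) (h2 : a ≤ b) (h3 : b ≤ t) (h4 : t ≤ T) : ω a b ≤ ω s t := by
  obtain ⟨-, hdiag, hpos, hsup⟩ := hω
  have h5 := hsup s a b hs h1 h2 (le_trans h3 h4)
  have h6 := hsup s b t hs (le_trans h1 h2) h3 h4
  have := hpos s a
  have := hpos b t
  linarith

lemma xi_chen (d e : ℕ) (p T : ℝ) (ω : ℝ → ℝ → ℝ) (R : RoughPath d p T ω)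
    (H : ℝ → List (Fin d) → Fin e → ℝ) (k : Fin e)
    {s u t : ℝ} (hs : 0 ≤ s) (hsu : s ≤ u) (hut : u ≤ t) (htT : t ≤ T) :
    Xi d e ⌊p⌋₊ R.X H s t k = Xi d e ⌊p⌋₊ R.X H s u k +
      ∑ b ∈ Finset.Icc 1 ⌊p⌋₊, ∑ β : Fin b → Fin d,
        (∑ a ∈ Finset.range (⌊p⌋₊ - b + 1), ∑ α : Fin a → Fin d,
          H s (List.ofFn α ++ List.ofFn β) k * R.X s u (List.ofFn α)) * R.X u t (List.ofFn β) := by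
  set N := ⌊p⌋₊ with hN
  have step1 : Xi d e N R.X H s t k
      = ∑ l ∈ Icc 1 N, ∑ v : Fin l → Fin d, ∑ i ∈ range (l + 1),
          H s (List.ofFn v) k * (R.X s u ((List.ofFn v).take i) * R.X u t ((List.ofFn v).drop i)) := by
    unfold Xi
    refine Finset.sum_congr rfl fun l hl => Finset.sum_congr rfl fun v _ => ?_
    have hlen : (List.ofFn v).length = l := List.length_ofFn
    have hle : (List.ofFn v).length ≤ N := by rw [hlen]; exact (Finset.mem_Icc.1 hl).2
    rw [R.chen s u t hs hsu hut htT (List.ofFn v) hle, Finset.mul_sum, hlen]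
  have step2 : ∀ l, ∀ v : Fin l → Fin d,
      (∑ i ∈ range (l + 1),
        H s (List.ofFn v) k * (R.X s u ((List.ofFn v).take i) * R.X u t ((List.ofFn v).drop i)))
      = H s (List.ofFn v) k * R.X s u (List.ofFn v)
        + ∑ i ∈ range l,
            H s (List.ofFn v) k * (R.X s u ((List.ofFn v).take i) * R.X u t ((List.ofFn v).drop i)) := by
    intro l v
    rw [Finset.sum_range_succ]
    have h1 : (List.ofFn v).take l = List.ofFn v :=
      List.take_of_length_le (by rw [List.length_ofFn])
    have h2 : (List.ofFn v).drop l = [] := by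
      apply List.drop_eq_nil_of_le
      rw [List.length_ofFn]
    rw [h1, h2, R.empty_eq, mul_one, add_comm]
  have step3 : Xi d e N R.X H s t k = Xi d e N R.X H s u k +
      ∑ l ∈ Icc 1 N, ∑ v : Fin l → Fin d, ∑ i ∈ range l,
        H s (List.ofFn v) k * (R.X s u ((List.ofFn v).take i) * R.X u t ((List.ofFn v).drop i)) := by
    rw [step1]
    rw [show (∑ l ∈ Icc 1 N, ∑ v : Fin l → Fin d, ∑ i ∈ range (l + 1),
          H s (List.ofFn v) k * (R.X s u ((List.ofFn v).take i) * R.X u t ((List.ofFn v).drop i)))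
        = ∑ l ∈ Icc 1 N, ∑ v : Fin l → Fin d,
            (H s (List.ofFn v) k * R.X s u (List.ofFn v)
              + ∑ i ∈ range l, H s (List.ofFn v) k *
                  (R.X s u ((List.ofFn v).take i) * R.X u t ((List.ofFn v).drop i)))
      from Finset.sum_congr rfl fun l _ => Finset.sum_congr rfl fun v _ => step2 l v]
    simp only [Finset.sum_add_distrib]
    rfl
  have step4 : ∀ l, (∑ v : Fin l → Fin d, ∑ i ∈ range l,
      H s (List.ofFn v) k * (R.X s u ((List.ofFn v).take i) * R.X u t ((List.ofFn v).drop i)))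
      = ∑ i ∈ range l, ∑ α : Fin i → Fin d, ∑ β : Fin (l - i) → Fin d,
          H s (List.ofFn α ++ List.ofFn β) k
            * (R.X s u (List.ofFn α) * R.X u t (List.ofFn β)) := by
    intro l
    rw [Finset.sum_comm]
    refine Finset.sum_congr rfl fun i hi => ?_
    have hil : i ≤ l := le_of_lt (Finset.mem_range.1 hi)
    have hrw : ∀ v : Fin l → Fin d,
        H s (List.ofFn v) k * (R.X s u ((List.ofFn v).take i) * R.X u t ((List.ofFn v).drop i))
        = (fun x y => H s (x ++ y) k * (R.X s u x * R.X u t y))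
            ((List.ofFn v).take i) ((List.ofFn v).drop i) := by
      intro v
      simp only
      rw [List.take_append_drop]
    calc (∑ v : Fin l → Fin d,
          H s (List.ofFn v) k * (R.X s u ((List.ofFn v).take i) * R.X u t ((List.ofFn v).drop i)))
        = ∑ v : Fin l → Fin d, (fun x y => H s (x ++ y) k * (R.X s u x * R.X u t y))
            ((List.ofFn v).take i) ((List.ofFn v).drop i) :=
          Finset.sum_congr rfl fun v _ => hrw v
      _ = ∑ α : Fin i → Fin d, ∑ β : Fin (l - i) → Fin d,
            H s (List.ofFn α ++ List.ofFn β) k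
              * (R.X s u (List.ofFn α) * R.X u t (List.ofFn β)) :=
          by exact sum_word_split' l i hil (fun x y => H s (x ++ y) k * (R.X s u x * R.X u t y))
  have step5 : (∑ l ∈ Icc 1 N, ∑ i ∈ range l, ∑ α : Fin i → Fin d, ∑ β : Fin (l - i) → Fin d,
        H s (List.ofFn α ++ List.ofFn β) k * (R.X s u (List.ofFn α) * R.X u t (List.ofFn β)))
      = ∑ b ∈ Icc 1 N, ∑ a ∈ range (N - b + 1), ∑ α : Fin a → Fin d, ∑ β : Fin b → Fin d,
        H s (List.ofFn α ++ List.ofFn β) k * (R.X s u (List.ofFn α) * R.X u t (List.ofFn β)) :=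
    sum_tri N (fun a b => ∑ α : Fin a → Fin d, ∑ β : Fin b → Fin d,
      H s (List.ofFn α ++ List.ofFn β) k * (R.X s u (List.ofFn α) * R.X u t (List.ofFn β)))
  rw [step3, Finset.sum_congr rfl fun l _ => step4 l, step5]
  congr 1
  refine Finset.sum_congr rfl fun b _ => ?_
  calc (∑ a ∈ range (N - b + 1), ∑ α : Fin a → Fin d, ∑ β : Fin b → Fin d,
        H s (List.ofFn α ++ List.ofFn β) k * (R.X s u (List.ofFn α) * R.X u t (List.ofFn β)))
      = ∑ a ∈ range (N - b + 1), ∑ β : Fin b → Fin d, ∑ α : Fin a → Fin d,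
          H s (List.ofFn α ++ List.ofFn β) k * (R.X s u (List.ofFn α) * R.X u t (List.ofFn β)) :=
        Finset.sum_congr rfl fun a _ => Finset.sum_comm
    _ = ∑ β : Fin b → Fin d, ∑ a ∈ range (N - b + 1), ∑ α : Fin a → Fin d,
          H s (List.ofFn α ++ List.ofFn β) k * (R.X s u (List.ofFn α) * R.X u t (List.ofFn β)) :=
        Finset.sum_comm
    _ = ∑ β : Fin b → Fin d,
          (∑ a ∈ range (N - b + 1), ∑ α : Fin a → Fin d,
            H s (List.ofFn α ++ List.ofFn β) k * R.X s u (List.ofFn α)) * R.X u t (List.ofFn β) := by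
        refine Finset.sum_congr rfl fun β _ => ?_
        rw [Finset.sum_mul]
        refine Finset.sum_congr rfl fun a _ => ?_
        rw [Finset.sum_mul]
        exact Finset.sum_congr rfl fun α _ => by ring

lemma partA (d e : ℕ) (p T : ℝ) (hp : 1 ≤ p) (ω : ℝ → ℝ → ℝ) (hω : IsControl ω T)
    (R : RoughPath d p T ω) (H : ℝ → List (Fin d) → Fin e → ℝ)
    (hHreg : ∃ C, ∀ w : List (Fin d), 1 ≤ w.length → w.length ≤ ⌊p⌋₊ →
      ∀ s t, 0 ≤ s → s ≤ t → t ≤ T → ∀ k, |H t w k - H s w k| ≤ C * ω s t ^ (1 / p))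
    (hHctrl : ∃ C, ∀ (b : ℕ) (β : Fin b → Fin d), 1 ≤ b → b ≤ ⌊p⌋₊ - 1 →
      ∀ s t, 0 ≤ s → s ≤ t → t ≤ T → ∀ k,
        |H t (List.ofFn β) k - ∑ l ∈ Finset.range (⌊p⌋₊ - b + 1), ∑ α : Fin l → Fin d,
              H s (List.ofFn α ++ List.ofFn β) k * R.X s t (List.ofFn α)|
          ≤ C * ω s t ^ (((⌊p⌋₊ : ℝ) - b + 1) / p)) :
    ∃ C, 0 ≤ C ∧ ∀ s u t, 0 ≤ s → s ≤ u → u ≤ t → t ≤ T → ∀ k,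
        |Xi d e ⌊p⌋₊ R.X H s t k - Xi d e ⌊p⌋₊ R.X H s u k - Xi d e ⌊p⌋₊ R.X H u t k|
          ≤ C * ω s t ^ (((⌊p⌋₊ : ℝ) + 1) / p) := by
  obtain ⟨C₁, hC₁⟩ := hHreg
  obtain ⟨C₂, hC₂⟩ := hHctrl
  obtain ⟨C₄, hC₄⟩ := R.regularity
  have hp0 : 0 < p := lt_of_lt_of_le one_pos hp
  set N := ⌊p⌋₊ with hN
  set C₃ : ℝ := max (max C₁ C₂) 0 with hC₃
  set C₅ : ℝ := max C₄ 0 with hC₅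
  have hC₃0 : 0 ≤ C₃ := le_max_right _ _
  have hC₅0 : 0 ≤ C₅ := le_max_right _ _
  have hC₁₃ : C₁ ≤ C₃ := le_trans (le_max_left _ _) (le_max_left _ _)
  have hC₂₃ : C₂ ≤ C₃ := le_trans (le_max_right _ _) (le_max_left _ _)
  have hD0 : (0:ℝ) ≤ ∑ b ∈ Icc 1 N, (Fintype.card (Fin b → Fin d) : ℝ) :=
    Finset.sum_nonneg fun b _ => Nat.cast_nonneg _
  refine ⟨(∑ b ∈ Icc 1 N, (Fintype.card (Fin b → Fin d) : ℝ)) * (C₃ * C₅),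
    mul_nonneg hD0 (mul_nonneg hC₃0 hC₅0), ?_⟩
  intro s u t hs hsu hut htT k
  have hst : s ≤ t := hsu.trans hut
  have hω0 : ∀ a b, 0 ≤ ω a b := hω.2.2.1
  have hsu_st : ω s u ≤ ω s t := control_mono hω hs (le_refl s) hsu hut htT
  have hut_st : ω u t ≤ ω s t := control_mono hω hs hsu hut (le_refl t) htT
  have key : Xi d e N R.X H s t k - Xi d e N R.X H s u k - Xi d e N R.X H u t k
      = ∑ b ∈ Icc 1 N, ∑ β : Fin b → Fin d,
          ((∑ a ∈ range (N - b + 1), ∑ α : Fin a → Fin d,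
            H s (List.ofFn α ++ List.ofFn β) k * R.X s u (List.ofFn α))
            - H u (List.ofFn β) k) * R.X u t (List.ofFn β) := by
    rw [xi_chen d e p T ω R H k hs hsu hut htT]
    have hXiut : Xi d e N R.X H u t k = ∑ b ∈ Icc 1 N, ∑ β : Fin b → Fin d,
        H u (List.ofFn β) k * R.X u t (List.ofFn β) := rfl
    rw [hXiut]
    rw [show ∀ x a c : ℝ, (x + a) - x - c = a - c from fun x a c => by ring]
    rw [← Finset.sum_sub_distrib]
    refine Finset.sum_congr rfl fun b _ => ?_
    rw [← Finset.sum_sub_distrib]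
    exact Finset.sum_congr rfl fun β _ => (sub_mul _ _ _).symm
  rw [key]
  have hterm : ∀ b ∈ Icc 1 N, ∀ β : Fin b → Fin d,
      |((∑ a ∈ range (N - b + 1), ∑ α : Fin a → Fin d,
            H s (List.ofFn α ++ List.ofFn β) k * R.X s u (List.ofFn α))
            - H u (List.ofFn β) k) * R.X u t (List.ofFn β)|
        ≤ (C₃ * C₅) * ω s t ^ (((N:ℝ) + 1) / p) := by
    intro b hb β
    obtain ⟨hb1, hb2⟩ := Finset.mem_Icc.1 hb
    have hq1 : (0:ℝ) ≤ ((N:ℝ) - b + 1) / p := by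
      have : (b:ℝ) ≤ (N:ℝ) := Nat.cast_le.2 hb2
      apply div_nonneg (by linarith) (le_of_lt hp0)
    have hq2 : (0:ℝ) ≤ (b:ℝ) / p := div_nonneg (Nat.cast_nonneg _) (le_of_lt hp0)
    have h1 : |(∑ a ∈ range (N - b + 1), ∑ α : Fin a → Fin d,
            H s (List.ofFn α ++ List.ofFn β) k * R.X s u (List.ofFn α))
            - H u (List.ofFn β) k| ≤ C₃ * ω s t ^ (((N:ℝ) - b + 1) / p) := by
      rw [abs_sub_comm]
      rcases lt_or_eq_of_le hb2 with hblt | hbeq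
      · have hble : b ≤ ⌊p⌋₊ - 1 := by omega
        have := hC₂ b β hb1 hble s u hs hsu (le_trans hut htT) k
        calc |H u (List.ofFn β) k - ∑ a ∈ range (N - b + 1), ∑ α : Fin a → Fin d,
                H s (List.ofFn α ++ List.ofFn β) k * R.X s u (List.ofFn α)|
            ≤ C₂ * ω s u ^ (((N:ℝ) - b + 1) / p) := this
          _ ≤ C₃ * ω s u ^ (((N:ℝ) - b + 1) / p) :=
              mul_le_mul_of_nonneg_right hC₂₃ (Real.rpow_nonneg (hω0 s u) _)
          _ ≤ C₃ * ω s t ^ (((N:ℝ) - b + 1) / p) :=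
              mul_le_mul_of_nonneg_left (Real.rpow_le_rpow (hω0 s u) hsu_st hq1) hC₃0
      · -- b = N
        have hrange : N - b + 1 = 1 := by omega
        have hinner : (∑ a ∈ range (N - b + 1), ∑ α : Fin a → Fin d,
            H s (List.ofFn α ++ List.ofFn β) k * R.X s u (List.ofFn α))
            = H s (List.ofFn β) k := by
          rw [hrange, Finset.sum_range_one]
          have : ∀ α : Fin 0 → Fin d,
              H s (List.ofFn α ++ List.ofFn β) k * R.X s u (List.ofFn α)
              = H s (List.ofFn β) k := by
            intro α
            rw [List.ofFn_zero, List.nil_append, R.empty_eq, mul_one]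
          rw [Finset.sum_congr rfl fun α _ => this α]
          simp
        rw [hinner]
        have hexp : ((N:ℝ) - b + 1) / p = 1 / p := by
          have : (b:ℝ) = (N:ℝ) := by exact_mod_cast congrArg (Nat.cast : ℕ → ℝ) hbeq
          rw [this]
          ring_nf
        rw [hexp]
        have hlen1 : 1 ≤ (List.ofFn β).length := by rw [List.length_ofFn]; exact hb1
        have hlen2 : (List.ofFn β).length ≤ ⌊p⌋₊ := by rw [List.length_ofFn]; omega
        calc |H u (List.ofFn β) k - H s (List.ofFn β) k|
            ≤ C₁ * ω s u ^ (1 / p) := hC₁ (List.ofFn β) hlen1 hlen2 s u hs hsu (le_trans hut htT) k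
          _ ≤ C₃ * ω s u ^ (1 / p) :=
              mul_le_mul_of_nonneg_right hC₁₃ (Real.rpow_nonneg (hω0 s u) _)
          _ ≤ C₃ * ω s t ^ (1 / p) :=
              mul_le_mul_of_nonneg_left
                (Real.rpow_le_rpow (hω0 s u) hsu_st (by positivity)) hC₃0
    have h2 : |R.X u t (List.ofFn β)| ≤ C₅ * ω s t ^ ((b:ℝ) / p) := by
      have hlen : (List.ofFn β).length ≤ ⌊p⌋₊ := by rw [List.length_ofFn]; omega
      have := hC₄ (List.ofFn β) hlen u t (le_trans hs hsu) hut htT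
      rw [List.length_ofFn] at this
      calc |R.X u t (List.ofFn β)| ≤ C₄ * ω u t ^ ((b:ℝ) / p) := this
        _ ≤ C₅ * ω u t ^ ((b:ℝ) / p) :=
            mul_le_mul_of_nonneg_right (le_max_left _ _) (Real.rpow_nonneg (hω0 u t) _)
        _ ≤ C₅ * ω s t ^ ((b:ℝ) / p) :=
            mul_le_mul_of_nonneg_left (Real.rpow_le_rpow (hω0 u t) hut_st hq2) hC₅0
    calc |((∑ a ∈ range (N - b + 1), ∑ α : Fin a → Fin d,
            H s (List.ofFn α ++ List.ofFn β) k * R.X s u (List.ofFn α))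
            - H u (List.ofFn β) k) * R.X u t (List.ofFn β)|
        = |(∑ a ∈ range (N - b + 1), ∑ α : Fin a → Fin d,
            H s (List.ofFn α ++ List.ofFn β) k * R.X s u (List.ofFn α))
            - H u (List.ofFn β) k| * |R.X u t (List.ofFn β)| := abs_mul _ _
      _ ≤ (C₃ * ω s t ^ (((N:ℝ) - b + 1) / p)) * (C₅ * ω s t ^ ((b:ℝ) / p)) :=
          mul_le_mul h1 h2 (abs_nonneg _)
            (mul_nonneg hC₃0 (Real.rpow_nonneg (hω0 s t) _))
      _ = (C₃ * C₅) * (ω s t ^ (((N:ℝ) - b + 1) / p) * ω s t ^ ((b:ℝ) / p)) := by ring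
      _ = (C₃ * C₅) * ω s t ^ (((N:ℝ) + 1) / p) := by
          rw [← Real.rpow_add_of_nonneg (hω0 s t) hq1 hq2]
          congr 1
          ring
  calc |∑ b ∈ Icc 1 N, ∑ β : Fin b → Fin d,
        ((∑ a ∈ range (N - b + 1), ∑ α : Fin a → Fin d,
            H s (List.ofFn α ++ List.ofFn β) k * R.X s u (List.ofFn α))
            - H u (List.ofFn β) k) * R.X u t (List.ofFn β)|
      ≤ ∑ b ∈ Icc 1 N, ∑ β : Fin b → Fin d,
        |((∑ a ∈ range (N - b + 1), ∑ α : Fin a → Fin d,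
            H s (List.ofFn α ++ List.ofFn β) k * R.X s u (List.ofFn α))
            - H u (List.ofFn β) k) * R.X u t (List.ofFn β)| := by
        refine le_trans (Finset.abs_sum_le_sum_abs _ _) ?_
        exact Finset.sum_le_sum fun b _ => Finset.abs_sum_le_sum_abs _ _
    _ ≤ ∑ b ∈ Icc 1 N, ∑ _β : Fin b → Fin d, (C₃ * C₅) * ω s t ^ (((N:ℝ) + 1) / p) :=
        Finset.sum_le_sum fun b hb => Finset.sum_le_sum fun β _ => hterm b hb β
    _ = (∑ b ∈ Icc 1 N, (Fintype.card (Fin b → Fin d) : ℝ)) *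
          ((C₃ * C₅) * ω s t ^ (((N:ℝ) + 1) / p)) := by
        rw [Finset.sum_mul]
        refine Finset.sum_congr rfl fun b _ => ?_
        rw [Finset.sum_const, Finset.card_univ, nsmul_eq_mul]
    _ = (∑ b ∈ Icc 1 N, (Fintype.card (Fin b → Fin d) : ℝ)) * (C₃ * C₅) *
          ω s t ^ (((N:ℝ) + 1) / p) := by ring

noncomputable def RSum (Ξ : ℝ → ℝ → ℝ) (τ : ℕ → ℝ) (m : ℕ) : ℝ :=
  ∑ i ∈ Finset.range m, Ξ (τ i) (τ (i + 1))

def IsPart (τ : ℕ → ℝ) (m : ℕ) (a b : ℝ) : Prop :=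
  τ 0 = a ∧ τ m = b ∧ ∀ i j : ℕ, i ≤ j → j ≤ m → τ i ≤ τ j

lemma IsPart.mem {τ : ℕ → ℝ} {m : ℕ} {a b : ℝ} (h : IsPart τ m a b) {i : ℕ} (hi : i ≤ m) :
    a ≤ τ i ∧ τ i ≤ b :=
  ⟨h.1 ▸ h.2.2 0 i (Nat.zero_le _) hi, h.2.1 ▸ h.2.2 i m hi (le_refl _)⟩

lemma IsPart.ab {τ : ℕ → ℝ} {m : ℕ} {a b : ℝ} (h : IsPart τ m a b) : a ≤ b :=
  (h.mem (Nat.zero_le m)).2.trans_eq' h.1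

lemma chain_omega_le {T : ℝ} {ω : ℝ → ℝ → ℝ} (hω : IsControl ω T) {a : ℝ} (ha : 0 ≤ a) :
    ∀ m (τ : ℕ → ℝ) (b : ℝ), b ≤ T → IsPart τ m a b →
      ∑ i ∈ Finset.range m, ω (τ i) (τ (i + 1)) ≤ ω a b := by
  intro m
  induction m with
  | zero => intro τ b hb hτ; simpa using hω.2.2.1 a b
  | succ m ih =>
    intro τ b hb hτ
    obtain ⟨h0, hm, hmono⟩ := hτ
    have hτ' : IsPart τ m a (τ m) := ⟨h0, rfl, fun i j hij hj => hmono i j hij (by omega)⟩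
    have ha_m : a ≤ τ m := (hτ'.mem (le_refl m)).1
    have hmm : τ m ≤ τ (m + 1) := hmono m (m + 1) (by omega) (le_refl _)
    have hbT : τ (m + 1) ≤ T := hm ▸ hb
    have h1 := ih τ (τ m) (le_trans hmm hbT) hτ'
    have h2 : ω a (τ m) + ω (τ m) (τ (m + 1)) ≤ ω a (τ (m + 1)) :=
      hω.2.2.2 a (τ m) (τ (m + 1)) ha ha_m hmm hbT
    rw [Finset.sum_range_succ, ← hm]
    linarith
  
lemma skip_omega_le {T : ℝ} {ω : ℝ → ℝ → ℝ} (hω : IsControl ω T) {a b : ℝ} (ha : 0 ≤ a)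
    (hb : b ≤ T) {m : ℕ} {τ : ℕ → ℝ} (hτ : IsPart τ m a b) :
    ∀ n, n + 1 ≤ m → ∑ i ∈ Finset.range n, ω (τ i) (τ (i + 2)) ≤ ω a (τ n) + ω a (τ (n + 1)) := by
  intro n
  induction n with
  | zero =>
    intro h
    have := hω.2.2.1 a (τ 0)
    have := hω.2.2.1 a (τ 1)
    simp only [Finset.range_zero, Finset.sum_empty]
    linarith
  | succ n ih =>
    intro h
    have h1 := ih (by omega)
    have hTn2 : τ (n + 2) ≤ T := le_trans (hτ.mem (by omega : n + 2 ≤ m)).2 hb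
    have h2 : ω a (τ n) + ω (τ n) (τ (n + 2)) ≤ ω a (τ (n + 2)) :=
      hω.2.2.2 a (τ n) (τ (n + 2)) ha (hτ.mem (by omega : n ≤ m)).1
        (hτ.2.2 n (n + 2) (by omega) (by omega)) hTn2
    rw [Finset.sum_range_succ]
    linarith

lemma psum_remove (Ξ : ℝ → ℝ → ℝ) (τ : ℕ → ℝ) (m i₀ : ℕ) (h : i₀ < m) :
    RSum Ξ (fun j => if j ≤ i₀ then τ j else τ (j + 1)) m
      = RSum Ξ τ (m + 1)
        - (Ξ (τ i₀) (τ (i₀ + 1)) + Ξ (τ (i₀ + 1)) (τ (i₀ + 2)) - Ξ (τ i₀) (τ (i₀ + 2))) := by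
  set τ' : ℕ → ℝ := fun j => if j ≤ i₀ then τ j else τ (j + 1) with hτ'
  have key : ∀ f g : ℕ → ℝ, (∀ j < i₀, g j = f j) → (∀ j, i₀ + 1 ≤ j → j < m → g j = f (j + 1)) →
      g i₀ = Ξ (τ i₀) (τ (i₀ + 2)) → (∀ j, f j = Ξ (τ j) (τ (j + 1))) →
      ∑ j ∈ Finset.range m, g j
        = ∑ j ∈ Finset.range (m + 1), f j
          - (Ξ (τ i₀) (τ (i₀ + 1)) + Ξ (τ (i₀ + 1)) (τ (i₀ + 2)) - Ξ (τ i₀) (τ (i₀ + 2))) := by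
    intro f g hlow hhigh hmid hf
    have e1 : ∑ j ∈ Finset.range m, g j
        = ∑ j ∈ Finset.range i₀, g j + ∑ j ∈ Finset.Ico i₀ m, g j :=
      (Finset.sum_range_add_sum_Ico g (le_of_lt h)).symm
    have e2 : ∑ j ∈ Finset.Ico i₀ m, g j = g i₀ + ∑ j ∈ Finset.Ico (i₀ + 1) m, g j :=
      Finset.sum_eq_sum_Ico_succ_bot h g
    have e3 : ∑ j ∈ Finset.Ico (i₀ + 1) m, g j = ∑ j ∈ Finset.Ico (i₀ + 2) (m + 1), f j := by
      rw [Finset.sum_Ico_eq_sum_range, Finset.sum_Ico_eq_sum_range]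
      have hc : m - (i₀ + 1) = m + 1 - (i₀ + 2) := by omega
      rw [← hc]
      refine Finset.sum_congr rfl fun r hr => ?_
      rw [Finset.mem_range] at hr
      rw [hhigh (i₀ + 1 + r) (by omega) (by omega)]
      congr 1
      omega
    have e4 : ∑ j ∈ Finset.range (m + 1), f j
        = ∑ j ∈ Finset.range i₀, f j + (f i₀ + (f (i₀ + 1) + ∑ j ∈ Finset.Ico (i₀ + 2) (m + 1), f j)) := by
      rw [← Finset.sum_range_add_sum_Ico f (by omega : i₀ ≤ m + 1),
        Finset.sum_eq_sum_Ico_succ_bot (by omega : i₀ < m + 1) f,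
        Finset.sum_eq_sum_Ico_succ_bot (by omega : i₀ + 1 < m + 1) f]
    have e5 : ∑ j ∈ Finset.range i₀, g j = ∑ j ∈ Finset.range i₀, f j :=
      Finset.sum_congr rfl fun j hj => hlow j (Finset.mem_range.1 hj)
    rw [e1, e2, e3, e5, e4, hmid, hf i₀, hf (i₀ + 1)]
    ring
  apply key
  · intro j hj
    simp only [hτ']
    rw [if_pos (by omega), if_pos (by omega)]
  · intro j hj1 hj2
    simp only [hτ']
    rw [if_neg (by omega), if_neg (by omega)]
  · simp only [hτ']
    rw [if_pos (le_refl _), if_neg (by omega)]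
  · intro j
    rfl

lemma xi_self {T : ℝ} {ω : ℝ → ℝ → ℝ} (hω : IsControl ω T) {Ξ : ℝ → ℝ → ℝ} {C θ : ℝ}
    (hθ : 1 < θ)
    (hΞ : ∀ s u t, 0 ≤ s → s ≤ u → u ≤ t → t ≤ T → |Ξ s t - Ξ s u - Ξ u t| ≤ C * ω s t ^ θ)
    {a : ℝ} (ha : 0 ≤ a) (haT : a ≤ T) : Ξ a a = 0 := by
  have h1 := hΞ a a a ha (le_refl a) (le_refl a) haT
  rw [hω.2.1 a, Real.zero_rpow (by positivity), mul_zero] at h1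
  have h2 : |Ξ a a| ≤ 0 := by
    have : Ξ a a - Ξ a a - Ξ a a = -Ξ a a := by ring
    rwa [this, abs_neg] at h1
  exact abs_eq_zero.1 (le_antisymm h2 (abs_nonneg _))

lemma maximal {T : ℝ} {ω : ℝ → ℝ → ℝ} (hω : IsControl ω T) {Ξ : ℝ → ℝ → ℝ} {C θ : ℝ}
    (hθ : 1 < θ) (hC : 0 ≤ C)
    (hΞ : ∀ s u t, 0 ≤ s → s ≤ u → u ≤ t → t ≤ T → |Ξ s t - Ξ s u - Ξ u t| ≤ C * ω s t ^ θ) :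
    ∀ m (τ : ℕ → ℝ) (a b : ℝ), 0 ≤ a → b ≤ T → IsPart τ m a b →
      |RSum Ξ τ m - Ξ a b|
        ≤ (C * 2 ^ θ * ∑ k ∈ Finset.Icc 1 (m - 1), (k : ℝ) ^ (-θ)) * ω a b ^ θ := by
  intro m
  induction m with
  | zero =>
    intro τ a b ha hb hτ
    have hab : a = b := hτ.1 ▸ hτ.2.1 ▸ rfl
    subst hab
    rw [show RSum Ξ τ 0 = 0 from rfl, xi_self hω hθ hΞ ha hb, hω.2.1 a,
      Real.zero_rpow (by positivity)]
    simp
  | succ m ih =>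
    intro τ a b ha hb hτ
    have hsum0 : ∀ n : ℕ, (0:ℝ) ≤ ∑ k ∈ Finset.Icc 1 n, (k : ℝ) ^ (-θ) :=
      fun n => Finset.sum_nonneg fun k _ => Real.rpow_nonneg (Nat.cast_nonneg _) _
    have hω0 : ∀ x y, 0 ≤ ω x y := hω.2.2.1
    rcases Nat.eq_zero_or_pos m with rfl | hm
    · have h1 : RSum Ξ τ 1 = Ξ a b := by
        rw [show RSum Ξ τ 1 = Ξ (τ 0) (τ 1) from by simp [RSum], hτ.1, hτ.2.1]
      rw [h1, sub_self, abs_zero]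
      have h2 := hsum0 (1 - 1)
      have h3 : (0:ℝ) ≤ 2 ^ θ := le_of_lt (Real.rpow_pos_of_pos two_pos θ)
      exact mul_nonneg (mul_nonneg (mul_nonneg hC h3) h2)
        (Real.rpow_nonneg (hω.2.2.1 a b) _)
    -- m ≥ 1 : partition with m+1 intervals
    have hmem : ∀ i ≤ m + 1, 0 ≤ τ i ∧ τ i ≤ T := fun i hi =>
      ⟨le_trans ha (hτ.mem hi).1, le_trans (hτ.mem hi).2 hb⟩
    have hskip : ∑ i ∈ Finset.range m, ω (τ i) (τ (i + 2)) ≤ 2 * ω a b := by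
      have h1 := skip_omega_le hω ha hb hτ m (le_refl _)
      have h2 : ω a (τ m) ≤ ω a b :=
        control_mono hω ha (le_refl a) (hτ.mem (by omega : m ≤ m + 1)).1
          (hτ.mem (by omega : m ≤ m + 1)).2 hb
      have h3 : τ (m + 1) = b := hτ.2.1
      rw [h3] at h1
      linarith
    have hex : ∃ i₀, i₀ < m ∧ ω (τ i₀) (τ (i₀ + 2)) ≤ 2 * ω a b / m := by
      obtain ⟨i₀, hmem₀, hmin⟩ := Finset.exists_min_image (Finset.range m)
        (fun i => ω (τ i) (τ (i + 2))) (Finset.nonempty_range_iff.2 (by omega))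
      refine ⟨i₀, Finset.mem_range.1 hmem₀, ?_⟩
      have hcard : (m:ℝ) * ω (τ i₀) (τ (i₀ + 2)) ≤ ∑ i ∈ Finset.range m, ω (τ i) (τ (i + 2)) := by
        have h := Finset.card_nsmul_le_sum (Finset.range m)
          (fun i => ω (τ i) (τ (i + 2))) (ω (τ i₀) (τ (i₀ + 2))) (fun i hi => hmin i hi)
        simpa [Finset.card_range, nsmul_eq_mul] using h
      have hmpos : (0:ℝ) < (m:ℝ) := by exact_mod_cast hm
      rw [le_div_iff₀ hmpos]
      nlinarith
    obtain ⟨i₀, hi₀, hω₀⟩ := hex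
    set τ' : ℕ → ℝ := fun j => if j ≤ i₀ then τ j else τ (j + 1) with hτ'def
    have hτ'p : IsPart τ' m a b := by
      refine ⟨?_, ?_, ?_⟩
      · simp only [hτ'def]; rw [if_pos (Nat.zero_le _)]; exact hτ.1
      · simp only [hτ'def]; rw [if_neg (by omega)]
        rw [show m + 1 = m + 1 from rfl]; exact hτ.2.1
      · intro i j hij hj
        simp only [hτ'def]
        by_cases h1 : i ≤ i₀ <;> by_cases h2 : j ≤ i₀ <;>
          simp only [h1, h2, if_true, if_false, if_pos, if_neg] <;>
          first
            | exact hτ.2.2 i j hij (by omega)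
            | exact hτ.2.2 i (j + 1) (by omega) (by omega)
            | omega
            | exact hτ.2.2 (i + 1) (j + 1) (by omega) (by omega)
    have hrem := psum_remove Ξ τ m i₀ hi₀
    rw [← hτ'def] at hrem
    have hih := ih τ' a b ha hb hτ'p
    -- defect bound
    have hdef : |Ξ (τ i₀) (τ (i₀ + 1)) + Ξ (τ (i₀ + 1)) (τ (i₀ + 2)) - Ξ (τ i₀) (τ (i₀ + 2))|
        ≤ C * (2 * ω a b / m) ^ θ := by
      have h1 := hΞ (τ i₀) (τ (i₀ + 1)) (τ (i₀ + 2)) (hmem i₀ (by omega)).1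
        (hτ.2.2 i₀ (i₀ + 1) (by omega) (by omega))
        (hτ.2.2 (i₀ + 1) (i₀ + 2) (by omega) (by omega)) (hmem (i₀ + 2) (by omega)).2
      have h2 : |Ξ (τ i₀) (τ (i₀ + 1)) + Ξ (τ (i₀ + 1)) (τ (i₀ + 2)) - Ξ (τ i₀) (τ (i₀ + 2))|
          = |Ξ (τ i₀) (τ (i₀ + 2)) - Ξ (τ i₀) (τ (i₀ + 1)) - Ξ (τ (i₀ + 1)) (τ (i₀ + 2))| := by
        rw [← abs_neg]; congr 1; ring
      rw [h2]
      refine le_trans h1 ?_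
      have h3 : ω (τ i₀) (τ (i₀ + 2)) ^ θ ≤ (2 * ω a b / m) ^ θ :=
        Real.rpow_le_rpow (hω0 _ _) hω₀ (by linarith)
      exact mul_le_mul_of_nonneg_left h3 hC
    -- assemble
    have hsplit : RSum Ξ τ (m + 1) - Ξ a b
        = (Ξ (τ i₀) (τ (i₀ + 1)) + Ξ (τ (i₀ + 1)) (τ (i₀ + 2)) - Ξ (τ i₀) (τ (i₀ + 2)))
          + (RSum Ξ τ' m - Ξ a b) := by
      rw [hrem]; ring
    have habs : |RSum Ξ τ (m + 1) - Ξ a b|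
        ≤ C * (2 * ω a b / m) ^ θ
          + (C * 2 ^ θ * ∑ k ∈ Finset.Icc 1 (m - 1), (k : ℝ) ^ (-θ)) * ω a b ^ θ := by
      rw [hsplit]
      exact le_trans (abs_add_le _ _) (add_le_add hdef hih)
    have hconv : C * (2 * ω a b / m) ^ θ = C * 2 ^ θ * (m:ℝ) ^ (-θ) * ω a b ^ θ := by
      have hm0 : (0:ℝ) ≤ (m:ℝ) := Nat.cast_nonneg _
      rw [Real.div_rpow (mul_nonneg (by norm_num) (hω0 a b)) hm0,
        Real.mul_rpow (by norm_num) (hω0 a b), Real.rpow_neg hm0]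
      field_simp
    have hsum_eq : ∑ k ∈ Finset.Icc 1 (m + 1 - 1), (k : ℝ) ^ (-θ)
        = ∑ k ∈ Finset.Icc 1 (m - 1), (k : ℝ) ^ (-θ) + (m:ℝ) ^ (-θ) := by
      have h1 : m + 1 - 1 = (m - 1) + 1 := by omega
      have hm1 : m - 1 + 1 = m := by omega
      rw [h1, Finset.sum_Icc_succ_top (by omega : 1 ≤ m - 1 + 1), hm1]
    calc |RSum Ξ τ (m + 1) - Ξ a b|
        ≤ C * (2 * ω a b / m) ^ θ
          + (C * 2 ^ θ * ∑ k ∈ Finset.Icc 1 (m - 1), (k : ℝ) ^ (-θ)) * ω a b ^ θ := habs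
      _ = (C * 2 ^ θ * (∑ k ∈ Finset.Icc 1 (m - 1), (k : ℝ) ^ (-θ) + (m:ℝ) ^ (-θ))) * ω a b ^ θ := by
          rw [hconv]; ring
      _ = (C * 2 ^ θ * ∑ k ∈ Finset.Icc 1 (m + 1 - 1), (k : ℝ) ^ (-θ)) * ω a b ^ θ := by
          rw [hsum_eq]

lemma sum_le_Z {θ : ℝ} (hθ : 1 < θ) (n : ℕ) :
    ∑ k ∈ Finset.Icc 1 n, (k : ℝ) ^ (-θ) ≤ ∑' k : ℕ, (k : ℝ) ^ (-θ) :=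
  Summable.sum_le_tsum _ (fun k _ => Real.rpow_nonneg (Nat.cast_nonneg _) _)
    (Real.summable_nat_rpow.2 (by linarith))

lemma psum_blocks (Ξ : ℝ → ℝ → ℝ) (ρ : ℕ → ℝ) (c : ℕ → ℕ) (hc0 : c 0 = 0) :
    ∀ m, (∀ i, i < m → c i ≤ c (i + 1)) →
      RSum Ξ ρ (c m) = ∑ i ∈ Finset.range m, ∑ j ∈ Finset.Ico (c i) (c (i + 1)), Ξ (ρ j) (ρ (j + 1)) := by
  intro m
  induction m with
  | zero => intro _; rw [hc0]; rfl
  | succ m ih =>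
    intro hmc
    rw [Finset.sum_range_succ, ← ih (fun i hi => hmc i (by omega))]
    have hle : c m ≤ c (m + 1) := hmc m (by omega)
    rw [RSum, RSum, ← Finset.sum_range_add_sum_Ico _ hle]

lemma refine_bound {T : ℝ} {ω : ℝ → ℝ → ℝ} (hω : IsControl ω T) {Ξ : ℝ → ℝ → ℝ} {K θ : ℝ}
    (hmax : ∀ m (τ : ℕ → ℝ) (a b : ℝ), 0 ≤ a → b ≤ T → IsPart τ m a b →
      |RSum Ξ τ m - Ξ a b| ≤ K * ω a b ^ θ)
    {a b : ℝ} (ha : 0 ≤ a) (hb : b ≤ T)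
    {τ : ℕ → ℝ} {m : ℕ} (hτ : IsPart τ m a b)
    {ρ : ℕ → ℝ} {Rn : ℕ} (hρ : IsPart ρ Rn a b)
    {c : ℕ → ℕ} (hc0 : c 0 = 0) (hcm : c m = Rn)
    (hcmono : ∀ i j, i ≤ j → j ≤ m → c i ≤ c j) (hagree : ∀ i ≤ m, ρ (c i) = τ i) :
    |RSum Ξ ρ Rn - RSum Ξ τ m| ≤ ∑ i ∈ Finset.range m, K * ω (τ i) (τ (i + 1)) ^ θ := by
  have hblocks : RSum Ξ ρ Rn
      = ∑ i ∈ Finset.range m, ∑ j ∈ Finset.Ico (c i) (c (i + 1)), Ξ (ρ j) (ρ (j + 1)) := by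
    rw [← hcm]
    exact psum_blocks Ξ ρ c hc0 m (fun i hi => hcmono i (i + 1) (by omega) (by omega))
  rw [hblocks, show RSum Ξ τ m = ∑ i ∈ Finset.range m, Ξ (τ i) (τ (i + 1)) from rfl,
    ← Finset.sum_sub_distrib]
  refine le_trans (Finset.abs_sum_le_sum_abs _ _) (Finset.sum_le_sum fun i hi => ?_)
  have him : i < m := Finset.mem_range.1 hi
  have hcile : c i ≤ c (i + 1) := hcmono i (i + 1) (by omega) (by omega)
  have hciRn : c (i + 1) ≤ Rn := hcm ▸ hcmono (i + 1) m him (le_refl m)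
  have hblock : ∑ j ∈ Finset.Ico (c i) (c (i + 1)), Ξ (ρ j) (ρ (j + 1))
      = RSum Ξ (fun r => ρ (c i + r)) (c (i + 1) - c i) := by
    rw [Finset.sum_Ico_eq_sum_range]
    rfl
  have hsub : IsPart (fun r => ρ (c i + r)) (c (i + 1) - c i) (τ i) (τ (i + 1)) := by
    refine ⟨?_, ?_, ?_⟩
    · show ρ (c i + 0) = τ i
      rw [Nat.add_zero]
      exact hagree i (le_of_lt him)
    · show ρ (c i + (c (i + 1) - c i)) = τ (i + 1)
      rw [show c i + (c (i + 1) - c i) = c (i + 1) from by omega]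
      exact hagree (i + 1) him
    · intro r r' hrr' hr'
      exact hρ.2.2 (c i + r) (c i + r') (by omega) (by omega)
  have h0τ : 0 ≤ τ i := le_trans ha (hτ.mem (le_of_lt him)).1
  have hτT : τ (i + 1) ≤ T := le_trans (hτ.mem him).2 hb
  rw [hblock]
  exact hmax _ _ _ _ h0τ hτT hsub

lemma merge_part {a b : ℝ} (τ σ : ℕ → ℝ) (m M : ℕ) (hτ : IsPart τ m a b) (hσ : IsPart σ M a b) :
    ∃ (ρ : ℕ → ℝ) (Rn : ℕ), IsPart ρ Rn a b
      ∧ (∃ c : ℕ → ℕ, c 0 = 0 ∧ c m = Rn ∧ (∀ i j, i ≤ j → j ≤ m → c i ≤ c j)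
          ∧ ∀ i ≤ m, ρ (c i) = τ i)
      ∧ (∃ c' : ℕ → ℕ, c' 0 = 0 ∧ c' M = Rn ∧ (∀ i j, i ≤ j → j ≤ M → c' i ≤ c' j)
          ∧ ∀ i ≤ M, ρ (c' i) = σ i) := by
  classical
  set F : Finset ℝ := ((Finset.range (m + 1)).image τ) ∪ ((Finset.range (M + 1)).image σ) with hF
  have hmemτ : ∀ i ≤ m, τ i ∈ F := fun i hi =>
    Finset.mem_union_left _ (Finset.mem_image_of_mem τ (Finset.mem_range.2 (by omega)))
  have hmemσ : ∀ i ≤ M, σ i ∈ F := fun i hi =>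
    Finset.mem_union_right _ (Finset.mem_image_of_mem σ (Finset.mem_range.2 (by omega)))
  have hFab : ∀ x ∈ F, a ≤ x ∧ x ≤ b := by
    intro x hx
    rw [hF, Finset.mem_union] at hx
    rcases hx with hx | hx <;> obtain ⟨i, hi, rfl⟩ := Finset.mem_image.1 hx
    · exact hτ.mem (Nat.lt_succ_iff.1 (Finset.mem_range.1 hi))
    · exact hσ.mem (Nat.lt_succ_iff.1 (Finset.mem_range.1 hi))
  have hpos : 0 < F.card := Finset.card_pos.2 ⟨τ 0, hmemτ 0 (Nat.zero_le _)⟩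
  have hcard : F.card = (F.card - 1) + 1 := by omega
  set Rn : ℕ := F.card - 1 with hRn
  set eo := F.orderIsoOfFin hcard with heo
  set ρ : ℕ → ℝ := fun j => (eo ⟨min j Rn, Nat.lt_succ_of_le (Nat.min_le_right _ _)⟩ : ℝ) with hρdef
  have hρmono : ∀ i j : ℕ, i ≤ j → ρ i ≤ ρ j := by
    intro i j hij
    simp only [hρdef]
    have h1 : (⟨min i Rn, Nat.lt_succ_of_le (Nat.min_le_right _ _)⟩ : Fin (Rn + 1))
        ≤ ⟨min j Rn, Nat.lt_succ_of_le (Nat.min_le_right _ _)⟩ :=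
      Fin.mk_le_mk.2 (min_le_min hij (le_refl _))
    exact Subtype.coe_le_coe.2 (eo.monotone h1)
  have hρF : ∀ j, (ρ j : ℝ) ∈ F := fun j => (eo _).2
  have build : ∀ (γ : ℕ → ℝ) (L : ℕ), IsPart γ L a b → (∀ i ≤ L, γ i ∈ F) →
      ∃ c : ℕ → ℕ, c 0 = 0 ∧ c L = Rn ∧ (∀ i j, i ≤ j → j ≤ L → c i ≤ c j)
        ∧ ∀ i ≤ L, ρ (c i) = γ i := by
    intro γ L hγ hmem
    set c : ℕ → ℕ := fun i =>
      ((eo.symm ⟨γ (min i L), hmem _ (min_le_right _ _)⟩ : Fin (Rn + 1)) : ℕ) with hcdef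
    have hagree : ∀ i, ρ (c i) = γ (min i L) := by
      intro i
      have hlt : c i < Rn + 1 := (eo.symm ⟨γ (min i L), hmem _ (min_le_right _ _)⟩).isLt
      have hmin : min (c i) Rn = c i := Nat.min_eq_left (by omega)
      simp only [hρdef, hcdef]
      have : (⟨min (((eo.symm ⟨γ (min i L), hmem _ (min_le_right _ _)⟩) : Fin (Rn+1)) : ℕ) Rn,
          Nat.lt_succ_of_le (Nat.min_le_right _ _)⟩ : Fin (Rn + 1))
          = eo.symm ⟨γ (min i L), hmem _ (min_le_right _ _)⟩ := by
        apply Fin.ext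
        simpa using hmin
      rw [this, OrderIso.apply_symm_apply]
    have hc0 : c 0 = 0 := by
      have h1 : (eo.symm ⟨γ (min 0 L), hmem _ (min_le_right _ _)⟩ : Fin (Rn + 1)) ≤ 0 := by
        rw [OrderIso.symm_apply_le]
        have : a ≤ (eo 0 : ℝ) := (hFab _ (eo 0).2).1
        have hγ0 : γ (min 0 L) = a := by
          rw [Nat.min_eq_left (Nat.zero_le _)]
          exact hγ.1
        exact Subtype.mk_le_mk.2 (hγ0 ▸ this)
      have h2 : (0 : Fin (Rn + 1)) ≤ eo.symm ⟨γ (min 0 L), hmem _ (min_le_right _ _)⟩ :=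
        Fin.zero_le _
      have := le_antisymm h1 h2
      simp only [hcdef]
      rw [this]
      rfl
    have hcL : c L = Rn := by
      have h1 : (Fin.last Rn) ≤ eo.symm ⟨γ (min L L), hmem _ (min_le_right _ _)⟩ := by
        rw [OrderIso.le_symm_apply]
        have : (eo (Fin.last Rn) : ℝ) ≤ b := (hFab _ (eo (Fin.last Rn)).2).2
        have hγL : γ (min L L) = b := by
          rw [Nat.min_self]
          exact hγ.2.1
        exact Subtype.mk_le_mk.2 (hγL ▸ this)
      have h2 := Fin.le_last (eo.symm ⟨γ (min L L), hmem _ (min_le_right _ _)⟩)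
      have := le_antisymm h2 h1
      simp only [hcdef]
      rw [this]
      rfl
    have hcmono : ∀ i j, i ≤ j → j ≤ L → c i ≤ c j := by
      intro i j hij hjL
      have hγle : γ (min i L) ≤ γ (min j L) :=
        hγ.2.2 _ _ (min_le_min hij (le_refl _)) (min_le_right _ _)
      have : (eo.symm ⟨γ (min i L), hmem _ (min_le_right _ _)⟩ : Fin (Rn + 1))
          ≤ eo.symm ⟨γ (min j L), hmem _ (min_le_right _ _)⟩ :=
        eo.symm.monotone (Subtype.mk_le_mk.2 hγle)
      exact this
    refine ⟨c, hc0, hcL, hcmono, fun i hi => ?_⟩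
    rw [hagree i, Nat.min_eq_left hi]
  obtain ⟨c, hc0, hcm, hcmono, hcagree⟩ := build τ m hτ hmemτ
  obtain ⟨c', hc'0, hc'M, hc'mono, hc'agree⟩ := build σ M hσ hmemσ
  refine ⟨ρ, Rn, ⟨?_, ?_, fun i j hij _ => hρmono i j hij⟩,
    ⟨c, hc0, hcm, hcmono, hcagree⟩, ⟨c', hc'0, hc'M, hc'mono, hc'agree⟩⟩
  · rw [← hc0, hcagree 0 (Nat.zero_le _), hτ.1]
  · rw [← hcm, hcagree m (le_refl _), hτ.2.1]

lemma mesh_sum_bound {T : ℝ} {ω : ℝ → ℝ → ℝ} (hω : IsControl ω T) {θ : ℝ} (hθ : 1 < θ)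
    {a b : ℝ} (ha : 0 ≤ a) (hb : b ≤ T) {τ : ℕ → ℝ} {m : ℕ} (hτ : IsPart τ m a b)
    {η : ℝ} (hη0 : 0 ≤ η) (hη : ∀ i < m, ω (τ i) (τ (i + 1)) ≤ η) :
    ∑ i ∈ Finset.range m, ω (τ i) (τ (i + 1)) ^ θ ≤ η ^ (θ - 1) * ω a b := by
  have hω0 := hω.2.2.1
  calc ∑ i ∈ Finset.range m, ω (τ i) (τ (i + 1)) ^ θ
      ≤ ∑ i ∈ Finset.range m, η ^ (θ - 1) * ω (τ i) (τ (i + 1)) := by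
        refine Finset.sum_le_sum fun i hi => ?_
        have h1 : ω (τ i) (τ (i + 1)) ^ θ
            = ω (τ i) (τ (i + 1)) ^ (θ - 1) * ω (τ i) (τ (i + 1)) ^ (1:ℝ) := by
          rw [← Real.rpow_add_of_nonneg (hω0 _ _) (by linarith) zero_le_one]
          congr 1
          ring
        rw [h1, Real.rpow_one]
        exact mul_le_mul_of_nonneg_right
          (Real.rpow_le_rpow (hω0 _ _) (hη i (Finset.mem_range.1 hi)) (by linarith)) (hω0 _ _)
    _ = η ^ (θ - 1) * ∑ i ∈ Finset.range m, ω (τ i) (τ (i + 1)) := (Finset.mul_sum _ _ _).symm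
    _ ≤ η ^ (θ - 1) * ω a b :=
        mul_le_mul_of_nonneg_left (chain_omega_le hω ha m τ b hb hτ) (Real.rpow_nonneg hη0 _)

lemma compare_parts {T : ℝ} {ω : ℝ → ℝ → ℝ} (hω : IsControl ω T) {Ξ : ℝ → ℝ → ℝ} {K θ : ℝ}
    (hθ : 1 < θ) (hK : 0 ≤ K)
    (hmax : ∀ m (τ : ℕ → ℝ) (a b : ℝ), 0 ≤ a → b ≤ T → IsPart τ m a b →
      |RSum Ξ τ m - Ξ a b| ≤ K * ω a b ^ θ)
    {a b : ℝ} (ha : 0 ≤ a) (hb : b ≤ T) {τ σ : ℕ → ℝ} {m M : ℕ}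
    (hτ : IsPart τ m a b) (hσ : IsPart σ M a b) {η : ℝ} (hη0 : 0 ≤ η)
    (hη1 : ∀ i < m, ω (τ i) (τ (i + 1)) ≤ η) (hη2 : ∀ i < M, ω (σ i) (σ (i + 1)) ≤ η) :
    |RSum Ξ τ m - RSum Ξ σ M| ≤ 2 * (K * (η ^ (θ - 1) * ω a b)) := by
  obtain ⟨ρ, Rn, hρ, ⟨c, hc0, hcm, hcmono, hcag⟩, ⟨c', hc'0, hc'M, hc'mono, hc'ag⟩⟩ :=
    merge_part τ σ m M hτ hσ
  have h1 := refine_bound hω hmax ha hb hτ hρ hc0 hcm hcmono hcag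
  have h2 := refine_bound hω hmax ha hb hσ hρ hc'0 hc'M hc'mono hc'ag
  have b1 : ∑ i ∈ Finset.range m, K * ω (τ i) (τ (i + 1)) ^ θ ≤ K * (η ^ (θ - 1) * ω a b) := by
    rw [← Finset.mul_sum]
    exact mul_le_mul_of_nonneg_left (mesh_sum_bound hω hθ ha hb hτ hη0 hη1) hK
  have b2 : ∑ i ∈ Finset.range M, K * ω (σ i) (σ (i + 1)) ^ θ ≤ K * (η ^ (θ - 1) * ω a b) := by
    rw [← Finset.mul_sum]
    exact mul_le_mul_of_nonneg_left (mesh_sum_bound hω hθ ha hb hσ hη0 hη2) hK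
  calc |RSum Ξ τ m - RSum Ξ σ M|
      ≤ |RSum Ξ τ m - RSum Ξ ρ Rn| + |RSum Ξ ρ Rn - RSum Ξ σ M| := abs_sub_le _ _ _
    _ ≤ K * (η ^ (θ - 1) * ω a b) + K * (η ^ (θ - 1) * ω a b) := by
        refine add_le_add ?_ ?_
        · rw [abs_sub_comm]
          exact le_trans h1 b1
        · exact le_trans h2 b2
    _ = 2 * (K * (η ^ (θ - 1) * ω a b)) := by ring

lemma sewing {T : ℝ} (hT : 0 ≤ T) {ω : ℝ → ℝ → ℝ} (hω : IsControl ω T)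
    {κ : Type*} [Finite κ] (Ξ : κ → ℝ → ℝ → ℝ) {C θ : ℝ} (hθ : 1 < θ) (hC : 0 ≤ C)
    (hΞ : ∀ k s u t, 0 ≤ s → s ≤ u → u ≤ t → t ≤ T →
      |Ξ k s t - Ξ k s u - Ξ k u t| ≤ C * ω s t ^ θ) :
    ∃ I : κ → ℝ, ∀ ε > (0:ℝ), ∃ δ > (0:ℝ), ∀ (m : ℕ) (τ : ℕ → ℝ), IsPart τ m 0 T →
      (∀ i < m, τ (i + 1) - τ i < δ) → ∀ k, |RSum (Ξ k) τ m - I k| < ε := by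
  have hω0 := hω.2.2.1
  set Z := ∑' n : ℕ, (n:ℝ) ^ (-θ) with hZ
  have hZ0 : 0 ≤ Z := tsum_nonneg fun n => Real.rpow_nonneg (Nat.cast_nonneg _) _
  have h2θ : (0:ℝ) ≤ 2 ^ θ := le_of_lt (Real.rpow_pos_of_pos two_pos _)
  set K := C * 2 ^ θ * Z with hKdef
  have hK : 0 ≤ K := mul_nonneg (mul_nonneg hC h2θ) hZ0
  have hmax : ∀ k, ∀ m (τ : ℕ → ℝ) (a b : ℝ), 0 ≤ a → b ≤ T → IsPart τ m a b →
      |RSum (Ξ k) τ m - Ξ k a b| ≤ K * ω a b ^ θ := by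
    intro k m τ a b ha hb hp
    refine le_trans (maximal hω hθ hC (hΞ k) m τ a b ha hb hp) ?_
    refine mul_le_mul_of_nonneg_right ?_ (Real.rpow_nonneg (hω0 a b) _)
    exact mul_le_mul_of_nonneg_left (sum_le_Z hθ _) (mul_nonneg hC h2θ)
  -- uniform continuity of the control near the diagonal
  have hUC : ∀ η > (0:ℝ), ∃ δ > (0:ℝ), ∀ u v, 0 ≤ u → u ≤ v → v ≤ T → v - u < δ → ω u v ≤ η := by
    intro η hη
    have hcomp : IsCompact (Set.Icc (0:ℝ) T ×ˢ Set.Icc (0:ℝ) T) :=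
      IsCompact.prod isCompact_Icc isCompact_Icc
    have hucont := hcomp.uniformContinuousOn_of_continuous hω.1.continuousOn
    rw [Metric.uniformContinuousOn_iff] at hucont
    obtain ⟨δ, hδ, hd⟩ := hucont η hη
    refine ⟨δ, hδ, fun u v hu huv hvT hlt => ?_⟩
    have hx : ((u, v) : ℝ × ℝ) ∈ Set.Icc (0:ℝ) T ×ˢ Set.Icc (0:ℝ) T :=
      Set.mem_prod.2 ⟨Set.mem_Icc.2 ⟨hu, le_trans huv hvT⟩,
        Set.mem_Icc.2 ⟨le_trans hu huv, hvT⟩⟩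
    have hy : ((v, v) : ℝ × ℝ) ∈ Set.Icc (0:ℝ) T ×ˢ Set.Icc (0:ℝ) T :=
      Set.mem_prod.2 ⟨Set.mem_Icc.2 ⟨le_trans hu huv, hvT⟩,
        Set.mem_Icc.2 ⟨le_trans hu huv, hvT⟩⟩
    have hdist : dist ((u, v) : ℝ × ℝ) ((v, v) : ℝ × ℝ) < δ := by
      rw [Prod.dist_eq]
      simp only [dist_self]
      rw [Real.dist_eq]
      rw [max_eq_left (abs_nonneg _)]
      rw [abs_of_nonpos (by linarith)]
      linarith
    have := hd (u, v) hx (v, v) hy hdist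
    rw [Real.dist_eq] at this
    have hωvv : ω v v = 0 := hω.2.1 v
    simp only [hωvv, sub_zero] at this
    rw [abs_of_nonneg (hω0 u v)] at this
    linarith
  -- smallness of the comparison bound
  have hsmall : ∀ ε > (0:ℝ), ∃ η > (0:ℝ), 2 * (K * (η ^ (θ - 1) * ω 0 T)) < ε := by
    intro ε hε
    rcases eq_or_lt_of_le (mul_nonneg hK (hω0 0 T) : (0:ℝ) ≤ K * ω 0 T) with h | h
    · refine ⟨1, one_pos, ?_⟩
      rw [Real.one_rpow]
      nlinarith
    · set A := K * ω 0 T with hA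
      have hApos : 0 < A := h
      have hθ1 : θ - 1 ≠ 0 := by linarith
      refine ⟨(ε / (4 * A)) ^ (1/(θ-1)), Real.rpow_pos_of_pos (by positivity) _, ?_⟩
      have hpow : ((ε / (4 * A)) ^ (1/(θ-1))) ^ (θ-1) = ε / (4 * A) := by
        rw [one_div]
        exact Real.rpow_inv_rpow (by positivity) hθ1
      have heq : 2 * (K * (((ε / (4 * A)) ^ (1/(θ-1))) ^ (θ-1) * ω 0 T))
          = 2 * (A * (ε / (4 * A))) := by
        rw [hpow, hA]
        ring
      rw [heq]
      have hAe : A * (ε / (4 * A)) = ε / 4 := by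
        field_simp
      rw [hAe]
      linarith
  -- the sequence of uniform partitions
  set un : ℕ → ℕ → ℝ := fun n i => ((min i (n + 1) : ℕ) : ℝ) * T / ((n:ℝ) + 1) with hun
  have hunP : ∀ n, IsPart (un n) (n + 1) 0 T := by
    intro n
    have hn1 : (0:ℝ) < (n:ℝ) + 1 := by positivity
    refine ⟨?_, ?_, ?_⟩
    · simp only [hun]
      rw [min_eq_left (Nat.zero_le _)]
      norm_num
    · simp only [hun, Nat.min_self]
      push_cast
      rw [mul_comm, mul_div_assoc, div_self (ne_of_gt hn1), mul_one]
    · intro i j hij hj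
      simp only [hun]
      have : ((min i (n + 1) : ℕ) : ℝ) ≤ ((min j (n + 1) : ℕ) : ℝ) :=
        Nat.cast_le.2 (min_le_min hij (le_refl _))
      have h2 : (0:ℝ) ≤ T := hT
      gcongr
  have hunMesh : ∀ n, ∀ i < n + 1, un n (i + 1) - un n i ≤ T / ((n:ℝ) + 1) := by
    intro n i hi
    have h1 : min (i + 1) (n + 1) = i + 1 := Nat.min_eq_left (by omega)
    have h2 : min i (n + 1) = i := Nat.min_eq_left (by omega)
    simp only [hun, h1, h2]
    have hn1 : (0:ℝ) < (n:ℝ) + 1 := by positivity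
    have heq : ((i + 1 : ℕ) : ℝ) * T / ((n:ℝ) + 1) - ((i : ℕ) : ℝ) * T / ((n:ℝ) + 1)
        = T / ((n:ℝ) + 1) := by
      push_cast
      field_simp
      ring
    exact le_of_eq heq
  -- mesh in terms of the control
  have hmesh_ω : ∀ η > (0:ℝ), ∃ δ > (0:ℝ), ∀ (m : ℕ) (τ : ℕ → ℝ), IsPart τ m 0 T →
      (∀ i < m, τ (i + 1) - τ i < δ) → ∀ i < m, ω (τ i) (τ (i + 1)) ≤ η := by
    intro η hη
    obtain ⟨δ, hδ, hd⟩ := hUC η hη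
    refine ⟨δ, hδ, fun m τ hτ hmesh i hi => ?_⟩
    have h1 : 0 ≤ τ i := le_trans (le_refl 0) (hτ.mem (by omega : i ≤ m)).1
    have h2 : τ i ≤ τ (i + 1) := hτ.2.2 i (i + 1) (by omega) (by omega)
    have h3 : τ (i + 1) ≤ T := (hτ.mem (by omega : i + 1 ≤ m)).2
    exact hd (τ i) (τ (i + 1)) h1 h2 h3 (hmesh i hi)
  -- the sequence of Riemann sums along uniform partitions
  set S : κ → ℕ → ℝ := fun k n => RSum (Ξ k) (un n) (n + 1) with hS
  have hTn_small : ∀ δ > (0:ℝ), ∃ N : ℕ, ∀ n ≥ N, ∀ i < n + 1, un n (i + 1) - un n i < δ := by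
    intro δ hδ
    obtain ⟨N, hN⟩ := exists_nat_gt (T / δ)
    refine ⟨N, fun n hn i hi => ?_⟩
    refine lt_of_le_of_lt (hunMesh n i hi) ?_
    rw [div_lt_iff₀ (by positivity : (0:ℝ) < (n:ℝ) + 1)]
    have hNn : (N:ℝ) ≤ (n:ℝ) := Nat.cast_le.2 hn
    have : T / δ < (n:ℝ) + 1 := by
      refine lt_of_lt_of_le hN ?_
      linarith
    calc T = (T / δ) * δ := by field_simp
      _ < ((n:ℝ) + 1) * δ := by
          apply mul_lt_mul_of_pos_right this hδ
      _ = δ * ((n:ℝ) + 1) := by ring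
  have hcauchy : ∀ k, CauchySeq (S k) := by
    intro k
    rw [Metric.cauchySeq_iff]
    intro ε hε
    obtain ⟨η, hη, hsm⟩ := hsmall ε hε
    obtain ⟨δ, hδ, hδω⟩ := hmesh_ω η hη
    obtain ⟨N, hN⟩ := hTn_small δ hδ
    refine ⟨N, fun n1 hn1 n2 hn2 => ?_⟩
    rw [Real.dist_eq]
    refine lt_of_le_of_lt ?_ hsm
    exact compare_parts hω hθ hK (hmax k) (le_refl (0:ℝ)) (le_refl T)
      (hunP n1) (hunP n2) (le_of_lt hη)
      (hδω (n1 + 1) (un n1) (hunP n1) (hN n1 hn1))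
      (hδω (n2 + 1) (un n2) (hunP n2) (hN n2 hn2))
  have hlim : ∀ k : κ, ∃ Ik : ℝ, Filter.Tendsto (S k) Filter.atTop (nhds Ik) :=
    fun k => cauchySeq_tendsto_of_complete (hcauchy k)
  choose I hI using hlim
  refine ⟨I, fun ε hε => ?_⟩
  obtain ⟨η, hη, hsm⟩ := hsmall (ε / 2) (by linarith)
  obtain ⟨δ, hδ, hδω⟩ := hmesh_ω η hη
  refine ⟨δ, hδ, fun m τ hτ hmesh k => ?_⟩
  -- choose a good index n
  have hev1 : ∀ᶠ n in Filter.atTop, ∀ i < n + 1, un n (i + 1) - un n i < δ := by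
    obtain ⟨N, hN⟩ := hTn_small δ hδ
    exact Filter.eventually_atTop.2 ⟨N, hN⟩
  have hev2 : ∀ᶠ n in Filter.atTop, ∀ k : κ, |S k n - I k| < ε / 2 := by
    rw [Filter.eventually_all]
    intro k
    obtain ⟨N, hN⟩ := Metric.tendsto_atTop.1 (hI k) (ε / 2) (by linarith)
    refine Filter.eventually_atTop.2 ⟨N, fun n hn => ?_⟩
    rw [← Real.dist_eq]
    exact hN n hn
  obtain ⟨n, hn1, hn2⟩ := (hev1.and hev2).exists
  have hcomp : |RSum (Ξ k) τ m - S k n| ≤ 2 * (K * (η ^ (θ - 1) * ω 0 T)) :=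
    compare_parts hω hθ hK (hmax k) (le_refl (0:ℝ)) (le_refl T) hτ (hunP n) (le_of_lt hη)
      (hδω m τ hτ hmesh) (hδω (n + 1) (un n) (hunP n) hn1)
  calc |RSum (Ξ k) τ m - I k|
      ≤ |RSum (Ξ k) τ m - S k n| + |S k n - I k| := abs_sub_le _ _ _
    _ < ε / 2 + ε / 2 := add_lt_add_of_le_of_lt (lt_of_le_of_lt hcomp hsm).le (hn2 k)
    _ = ε := by ring

/-- For a controlled integrand `H̄ ∈ D_X(L(V,W))`, the
approximant `Ξ_{s,t} = ⟨H̄_s, X^{≥1}_{s,t}⟩` is almost additive with defect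
`O(ω(s,t)^{(⌊p⌋+1)/p})`; consequently the rough integral `∫₀ᵀ H̄ dX` exists
as the limit of the Riemann sums `∑_{[u,v]∈π} Ξ_{u,v}` along partitions of
`[0,T]` with vanishing mesh. -/
theorem controlled_integrand_almost_additive_and_integral_exists
    (d e : ℕ) (p T : ℝ) (hp : 1 ≤ p) (hT : 0 ≤ T)
    (ω : ℝ → ℝ → ℝ) (hω : IsControl ω T) (R : RoughPath d p T ω)
    (H : ℝ → List (Fin d) → Fin e → ℝ)
    (hHcont : ∀ w k, Continuous fun t => H t w k)
    (hHreg : ∃ C, ∀ w : List (Fin d), 1 ≤ w.length → w.length ≤ ⌊p⌋₊ →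
      ∀ s t, 0 ≤ s → s ≤ t → t ≤ T → ∀ k,
        |H t w k - H s w k| ≤ C * ω s t ^ (1 / p))
    (hHctrl : ∃ C, ∀ (b : ℕ) (β : Fin b → Fin d), 1 ≤ b → b ≤ ⌊p⌋₊ - 1 →
      ∀ s t, 0 ≤ s → s ≤ t → t ≤ T → ∀ k,
        |H t (List.ofFn β) k -
            ∑ l ∈ Finset.range (⌊p⌋₊ - b + 1), ∑ α : Fin l → Fin d,
              H s (List.ofFn α ++ List.ofFn β) k * R.X s t (List.ofFn α)|
          ≤ C * ω s t ^ (((⌊p⌋₊ : ℝ) - b + 1) / p)) :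
    (∃ C, ∀ s u t, 0 ≤ s → s ≤ u → u ≤ t → t ≤ T → ∀ k,
        |Xi d e ⌊p⌋₊ R.X H s t k - Xi d e ⌊p⌋₊ R.X H s u k - Xi d e ⌊p⌋₊ R.X H u t k|
          ≤ C * ω s t ^ (((⌊p⌋₊ : ℝ) + 1) / p)) ∧
    ∃ I : Fin e → ℝ, ∀ ε > (0 : ℝ), ∃ δ > (0 : ℝ),
      ∀ (m : ℕ) (τ : Fin (m + 1) → ℝ), Monotone τ → τ 0 = 0 → τ (Fin.last m) = T →
        (∀ i : Fin m, τ i.succ - τ i.castSucc < δ) → ∀ k,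
          |(∑ i : Fin m, Xi d e ⌊p⌋₊ R.X H (τ i.castSucc) (τ i.succ) k) - I k| < ε := by
  obtain ⟨C, hC0, hadd⟩ := partA d e p T hp ω hω R H hHreg hHctrl
  have hp0 : 0 < p := lt_of_lt_of_le one_pos hp
  have hθ : 1 < ((⌊p⌋₊ : ℝ) + 1) / p := by
    rw [lt_div_iff₀ hp0, one_mul]
    exact Nat.lt_floor_add_one p
  refine ⟨⟨C, hadd⟩, ?_⟩
  obtain ⟨I, hI⟩ := sewing hT hω (fun k s t => Xi d e ⌊p⌋₊ R.X H s t k) hθ hC0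
    (fun k s u t hs hsu hut htT => hadd s u t hs hsu hut htT k)
  refine ⟨I, fun ε hε => ?_⟩
  obtain ⟨δ, hδ, hd⟩ := hI ε hε
  refine ⟨δ, hδ, fun m τ hmono h0 hlast hmesh k => ?_⟩
  set τ' : ℕ → ℝ := fun i => τ ⟨min i m, Nat.lt_succ_of_le (Nat.min_le_right _ _)⟩ with hτ'
  have hpart : IsPart τ' m 0 T := by
    refine ⟨?_, ?_, ?_⟩
    · have e0 : (⟨min 0 m, Nat.lt_succ_of_le (Nat.min_le_right _ _)⟩ : Fin (m + 1)) = 0 :=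
        Fin.ext (by simp)
      simp only [hτ']
      rw [e0]
      exact h0
    · have el : (⟨min m m, Nat.lt_succ_of_le (Nat.min_le_right _ _)⟩ : Fin (m + 1))
          = Fin.last m := Fin.ext (by simp)
      simp only [hτ']
      rw [el]
      exact hlast
    · intro i j hij hj
      simp only [hτ']
      exact hmono (Fin.mk_le_mk.2 (min_le_min hij (le_refl _)))
  have hmesh' : ∀ i < m, τ' (i + 1) - τ' i < δ := by
    intro i hi
    have h1 : τ' (i + 1) = τ (⟨i, hi⟩ : Fin m).succ := by
      simp only [hτ']
      congr 1
      apply Fin.ext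
      simp only [Fin.succ_mk]
      exact Nat.min_eq_left (by omega)
    have h2 : τ' i = τ (⟨i, hi⟩ : Fin m).castSucc := by
      simp only [hτ']
      congr 1
      apply Fin.ext
      simp only [Fin.castSucc_mk]
      exact Nat.min_eq_left (by omega)
    rw [h1, h2]
    exact hmesh ⟨i, hi⟩
  have hsum : (∑ i : Fin m, Xi d e ⌊p⌋₊ R.X H (τ i.castSucc) (τ i.succ) k)
      = ∑ i ∈ Finset.range m, Xi d e ⌊p⌋₊ R.X H (τ' i) (τ' (i + 1)) k := by
    rw [← Fin.sum_univ_eq_sum_range (fun i => Xi d e ⌊p⌋₊ R.X H (τ' i) (τ' (i + 1)) k) m]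
    refine Finset.sum_congr rfl fun i _ => ?_
    have h1 : τ' ((i : ℕ) + 1) = τ i.succ := by
      simp only [hτ']
      congr 1
      apply Fin.ext
      simp only [Fin.val_succ]
      exact Nat.min_eq_left (by omega)
    have h2 : τ' (i : ℕ) = τ i.castSucc := by
      simp only [hτ']
      congr 1
      apply Fin.ext
      simp only [Fin.coe_castSucc]
      exact Nat.min_eq_left (by omega)
    rw [h1, h2]
  rw [hsum]
  exact hd m τ' hpart hmesh' k
end
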